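/- arXiv:1909.12712 — 12 statements merged into one kernel-verified Lean document; each statement's English description precedes it below -/
import Mathlib

section
/- Let R be a semiprime ring, I a two-sided ideal of R, and c ∈ I an element that is regular in I (i.e., for all nonzero s ∈ I, cs ≠ 0 and sc ≠ 0). If M = ann_R(I) is the two-sided annihilator of I, then the left annihilator of c in R equals M and the right annihilator of c in R equals M. -/
/-- A ring is semiprime if it has no nonzero element `a` with `a R a = 0`. -/
def IsSemiprimeRing (R : Type*) [Ring R] : Prop :=
  ∀ a : R, (∀ r : R, a * r * a = 0) → a = 0

/-- The left annihilator of a subset. -/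
def leftAnn {R : Type*} [Ring R] (A : Set R) : Set R := {r | ∀ a ∈ A, r * a = 0}

/-- The right annihilator of a subset. -/
def rightAnn {R : Type*} [Ring R] (A : Set R) : Set R := {r | ∀ a ∈ A, a * r = 0}

/-- The two-sided annihilator of a subset. -/
def twoAnn {R : Type*} [Ring R] (A : Set R) : Set R := leftAnn A ∩ rightAnn A

/-- `c` is regular in a subset `A`: multiplication by `c` kills no nonzero element of `A`. -/
def RegularIn {R : Type*} [Ring R] (c : R) (A : Set R) : Prop :=
  ∀ s ∈ A, s ≠ 0 → c * s ≠ 0 ∧ s * c ≠ 0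

/-- in a semiprime ring, for `c ∈ I` regular in the two-sided ideal `I`,
the left and the right annihilator of `c` both equal `M = ann_R(I)`. -/
theorem stmt0 {R : Type*} [Ring R] (hsp : IsSemiprimeRing R)
    (I : TwoSidedIdeal R) (c : R) (hc : c ∈ I) (hreg : RegularIn c (I : Set R))
    (M : Set R) (hM : M = twoAnn (I : Set R)) :
    leftAnn {c} = M ∧ rightAnn {c} = M := by
  subst hM
  have hmem : ∀ s : R, s ∈ I → s ∈ (I : Set R) := fun s hs => hs
  -- if r * c = 0 then r ∈ twoAnn I
  have key1 : ∀ r : R, r * c = 0 → r ∈ twoAnn (I : Set R) := by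
    intro r hrc
    have hra : ∀ a ∈ I, a * r = 0 := by
      intro a ha
      by_contra h
      exact (hreg _ (hmem _ (I.mul_mem_right a r ha)) h).2
        (by rw [mul_assoc, hrc, mul_zero])
    constructor
    · intro a ha
      have ha' : a ∈ I := ha
      apply hsp
      intro x
      have h1 : (a * x) * r = 0 := hra _ (I.mul_mem_right a x ha')
      calc r * a * x * (r * a) = r * ((a * x) * r) * a := by noncomm_ring
        _ = 0 := by rw [h1, mul_zero, zero_mul]
    · intro a ha
      exact hra a ha
  -- if c * r = 0 then r ∈ twoAnn I
  have key2 : ∀ r : R, c * r = 0 → r ∈ twoAnn (I : Set R) := by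
    intro r hcr
    have hra : ∀ a ∈ I, r * a = 0 := by
      intro a ha
      by_contra h
      exact (hreg _ (hmem _ (I.mul_mem_left r a ha)) h).1
        (by rw [← mul_assoc, hcr, zero_mul])
    refine ⟨fun a ha => hra a ha, ?_⟩
    intro a ha
    have ha' : a ∈ I := ha
    apply hsp
    intro x
    have h1 : r * (x * a) = 0 := hra _ (I.mul_mem_left x a ha')
    calc a * r * x * (a * r) = a * (r * (x * a)) * r := by noncomm_ring
      _ = 0 := by rw [h1, mul_zero, zero_mul]
  constructor
  · ext r
    constructor
    · intro h
      exact key1 r (h c rfl)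
    · intro h a ha
      rw [Set.mem_singleton_iff] at ha
      rw [ha]
      exact h.1 c hc
  · ext r
    constructor
    · intro h
      exact key2 r (h c rfl)
    · intro h a ha
      rw [Set.mem_singleton_iff] at ha
      rw [ha]
      exact h.2 c hc
end

section
/- Let R be a semiprime ring, I an ideal of R, c ∈ I regular in I, and M = ann_R(I). Then the image of c in the quotient ring R/M is a regular element (non-zero-divisor) of R/M. -/
/-- the image of `c` in `R/M` (where `M = ann_R(I)`) is a regular element of
`R/M`, i.e. it is neither a left nor right zero divisor modulo `M`. -/
theorem stmt1 {R : Type*} [Ring R] (hsp : IsSemiprimeRing R)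
    (I : TwoSidedIdeal R) (c : R) (hc : c ∈ I) (hreg : RegularIn c (I : Set R))
    (M : Set R) (hM : M = twoAnn (I : Set R)) :
    (∀ r : R, c * r ∈ M → r ∈ M) ∧ (∀ r : R, r * c ∈ M → r ∈ M) := by
  subst hM
  constructor
  · intro r hr
    obtain ⟨hl, hrr⟩ := hr
    -- left part: r * a = 0 for a ∈ I
    have hleft : ∀ a ∈ (I : Set R), r * a = 0 := by
      intro a ha
      have hmem : r * a ∈ (I : Set R) := I.mul_mem_left r a ha
      have hcra : c * (r * a) = 0 := by rw [← mul_assoc]; exact hl a ha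
      by_contra h
      exact (hreg _ hmem h).1 hcra
    refine ⟨hleft, ?_⟩
    intro a ha
    have hmem : a * r ∈ (I : Set R) := I.mul_mem_right a r ha
    have harc : a * r * c = 0 := by
      apply hsp
      intro x
      have hx : c * x * a ∈ (I : Set R) := I.mul_mem_left _ _ ha
      have : r * (c * x * a) = 0 := hleft _ hx
      calc a * r * c * x * (a * r * c)
          = a * (r * (c * x * a)) * (r * c) := by noncomm_ring
        _ = 0 := by rw [this, mul_zero, zero_mul]
    by_contra h
    exact (hreg _ hmem h).2 harc
  · intro r hr
    obtain ⟨hl, hrr⟩ := hr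
    have hright : ∀ a ∈ (I : Set R), a * r = 0 := by
      intro a ha
      have hmem : a * r ∈ (I : Set R) := I.mul_mem_right a r ha
      have harc : (a * r) * c = 0 := by rw [mul_assoc]; exact hrr a ha
      by_contra h
      exact (hreg _ hmem h).2 harc
    refine ⟨?_, hright⟩
    intro a ha
    have hmem : r * a ∈ (I : Set R) := I.mul_mem_left r a ha
    have hcra : c * (r * a) = 0 := by
      have : c * r * a = 0 := by
        apply hsp
        intro x
        have hx : a * x * c ∈ (I : Set R) := I.mul_mem_right _ _ (I.mul_mem_right _ _ ha)
        have h0 : (a * x * c) * r = 0 := hright _ hx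
        calc c * r * a * x * (c * r * a)
            = c * r * ((a * x * c) * r) * a := by noncomm_ring
          _ = 0 := by rw [h0, mul_zero, zero_mul]
      rw [← mul_assoc]; exact this
    by_contra h
    exact (hreg _ hmem h).1 hcra
end

section
/- Let R be a semiprime ring satisfying the ascending chain condition on left annihilators (e.g., left Goldie), σ an automorphism of R, and I an ideal of R with σ(I) ⊆ I. Then σ(ann_R(I)) = ann_R(I). -/
/-- The ascending chain condition on left annihilators. -/
def AccLeftAnnihilators (R : Type*) [Ring R] : Prop :=
  ∀ f : ℕ → Set R, (∀ n, ∃ A : Set R, f n = leftAnn A) → (∀ n, f n ⊆ f (n + 1)) →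
    ∃ n, ∀ m, n ≤ m → f m = f n

lemma leftAnn_image {R : Type*} [Ring R] (σ : R ≃+* R) (A : Set R) :
    leftAnn ((σ : R → R) '' A) = (σ : R → R) '' leftAnn A := by
  ext r
  simp only [leftAnn, Set.mem_setOf_eq, Set.mem_image]
  constructor
  · intro h
    refine ⟨σ.symm r, fun a ha => σ.injective ?_, by simp⟩
    have := h (σ a) ⟨a, ha, rfl⟩
    simp [map_mul, this]
  · rintro ⟨s, hs, rfl⟩ x ⟨a, ha, rfl⟩
    rw [← map_mul, hs a ha, map_zero]

lemma twoAnn_eq_leftAnn {R : Type*} [Ring R] (hsp : IsSemiprimeRing R)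
    (I : TwoSidedIdeal R) : twoAnn (I : Set R) = leftAnn (I : Set R) := by
  have h1 : leftAnn (I : Set R) ⊆ rightAnn (I : Set R) := by
    intro r hr a ha
    apply hsp (a * r)
    intro s
    have hsa : s * a ∈ I := I.mul_mem_left s a ha
    have h0 : r * (s * a) = 0 := hr _ hsa
    calc a * r * s * (a * r) = a * (r * (s * a)) * r := by simp [mul_assoc]
      _ = 0 := by rw [h0]; simp
  have h2 : rightAnn (I : Set R) ⊆ leftAnn (I : Set R) := by
    intro r hr a ha
    apply hsp (r * a)
    intro s
    have has : a * s ∈ I := I.mul_mem_right a s ha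
    have h0 : (a * s) * r = 0 := hr _ has
    calc r * a * s * (r * a) = r * ((a * s) * r) * a := by simp [mul_assoc]
      _ = 0 := by rw [h0]; simp
  unfold twoAnn
  exact Set.inter_eq_left.mpr h1

/-- if `R` is semiprime with ACC on left annihilators, `σ` an automorphism,
and `I` an ideal with `σ(I) ⊆ I`, then `σ(ann_R(I)) = ann_R(I)`. -/
theorem stmt2 {R : Type*} [Ring R] (hsp : IsSemiprimeRing R)
    (hacc : AccLeftAnnihilators R) (σ : R ≃+* R) (I : TwoSidedIdeal R)
    (hσI : ∀ a ∈ I, σ a ∈ I) :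
    σ '' twoAnn (I : Set R) = twoAnn (I : Set R) := by
  rw [twoAnn_eq_leftAnn hsp I]
  set L : Set R := leftAnn (I : Set R) with hLdef
  have hsub : (σ : R → R) '' (I : Set R) ⊆ (I : Set R) := by
    rintro _ ⟨a, ha, rfl⟩; exact hσI a ha
  set f : ℕ → Set R := fun n => leftAnn ((⇑σ)^[n] '' (I : Set R)) with hf
  have hstep : ∀ n, (⇑σ)^[n + 1] '' (I : Set R) ⊆ (⇑σ)^[n] '' (I : Set R) := by
    intro n
    rw [Function.iterate_succ, Set.image_comp]
    exact Set.image_mono hsub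
  have hmono : ∀ n, f n ⊆ f (n + 1) := fun n r hr a ha => hr a (hstep n ha)
  have hiter : ∀ n, f n = (⇑σ)^[n] '' L := by
    intro n
    induction n with
    | zero => simp [hf, hLdef]
    | succ n ih =>
      have : (⇑σ)^[n + 1] '' (I : Set R) = (σ : R → R) '' ((⇑σ)^[n] '' (I : Set R)) := by
        rw [Function.iterate_succ', Set.image_comp]
      calc f (n + 1) = leftAnn ((⇑σ)^[n + 1] '' (I : Set R)) := rfl
        _ = (σ : R → R) '' leftAnn ((⇑σ)^[n] '' (I : Set R)) := by
            rw [this, leftAnn_image]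
        _ = (σ : R → R) '' ((⇑σ)^[n] '' L) := by rw [show leftAnn ((⇑σ)^[n] '' (I : Set R)) = f n from rfl, ih]
        _ = (⇑σ)^[n + 1] '' L := by rw [Function.iterate_succ', Set.image_comp]
  obtain ⟨n, hn⟩ := hacc f (fun n => ⟨_, rfl⟩) hmono
  have key : f (n + 1) = f n := hn (n + 1) (Nat.le_succ n)
  rw [hiter (n + 1), hiter n] at key
  have key2 : (⇑σ)^[n] '' ((σ : R → R) '' L) = (⇑σ)^[n] '' L := by
    rw [← Set.image_comp, ← Function.iterate_succ]
    exact key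
  exact Set.image_injective.mpr ((σ.injective).iterate n) key2
end

section
/- Let R be a semiprime ring, σ an automorphism of R, δ a σ-derivation of R, and I an ideal of R with σ(I) ⊆ I and such that δ(I)·I ⊆ I and σ(I)·δ(I) ⊆ I. Set M = ann_R(I) and suppose σ(M) = M. Then δ(M) ⊆ M. -/
/-- `δ` is a `σ`-derivation: `δ(ab) = δ(a)b + σ(a)δ(b)`. -/
def IsSkewDerivation {R : Type*} [Ring R] (σ : R →+* R) (δ : R →+ R) : Prop :=
  ∀ a b : R, δ (a * b) = δ a * b + σ a * δ b

/-- if `σ(I) ⊆ I`, `δ(I)·I ⊆ I`, `σ(I)·δ(I) ⊆ I` and `σ(M) = M` for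
`M = ann_R(I)`, then `δ(M) ⊆ M`. -/
theorem stmt3 {R : Type*} [Ring R] (hsp : IsSemiprimeRing R)
    (σ : R ≃+* R) (δ : R →+ R) (hδ : IsSkewDerivation (σ : R →+* R) δ)
    (I : TwoSidedIdeal R)
    (hσI : ∀ a ∈ I, σ a ∈ I)
    (hδI : ∀ a ∈ I, ∀ b ∈ I, δ a * b ∈ I)
    (hσδI : ∀ a ∈ I, ∀ b ∈ I, σ a * δ b ∈ I)
    (M : Set R) (hM : M = twoAnn (I : Set R))
    (hσM : σ '' M = M) :
    ∀ m ∈ M, δ m ∈ M := by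
  intro m hm
  have hmr : ∀ i ∈ I, i * m = 0 := (hM ▸ hm).2
  have hσm : σ m ∈ M := by rw [← hσM]; exact ⟨m, hm, rfl⟩
  have hml : ∀ i ∈ I, m * i = 0 := (hM ▸ hm).1
  have hσml : ∀ i ∈ I, σ m * i = 0 := (hM ▸ hσm).1
  -- σ b * δ m = - δ b * m for b ∈ I
  have key1 : ∀ b ∈ I, σ b * δ m = - (δ b * m) := by
    intro b hb
    have h := hδ b m
    rw [hmr b hb, map_zero] at h
    exact eq_neg_of_add_eq_zero_right h.symm
  -- σ a * σ b * δ m = 0 for a, b ∈ I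
  have key2 : ∀ a ∈ I, ∀ b ∈ I, σ a * (σ b * δ m) = 0 := by
    intro a ha b hb
    rw [key1 b hb, mul_neg, ← mul_assoc, hmr _ (hσδI a ha b hb), neg_zero]
  -- σ a * δ m = 0 for a ∈ I
  have key3 : ∀ a ∈ I, σ a * δ m = 0 := by
    intro a ha
    apply hsp
    intro r
    have hb : (σ.symm (δ m * r)) * a ∈ I := I.mul_mem_left _ _ ha
    have h := key2 a ha _ hb
    rw [map_mul, RingEquiv.apply_symm_apply] at h
    calc σ a * δ m * r * (σ a * δ m)
        = σ a * (δ m * r * σ a * δ m) := by noncomm_ring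
      _ = 0 := h
  -- δ m * (a * b) = 0 for a, b ∈ I
  have key4 : ∀ a ∈ I, ∀ b ∈ I, δ m * (a * b) = 0 := by
    intro a ha b hb
    have h := hδ m (a * b)
    rw [hml _ (I.mul_mem_right a b ha), map_zero, hδ a b, mul_add] at h
    have h1 : (σ : R →+* R) m * (δ a * b) = 0 := hσml _ (hδI a ha b hb)
    have h2 : (σ : R →+* R) m * ((σ : R →+* R) a * δ b) = 0 := hσml _ (hσδI a ha b hb)
    have h' := h.symm
    rw [h1, h2, add_zero, add_zero] at h'
    exact h'
  -- δ m * a = 0 for a ∈ I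
  have key5 : ∀ a ∈ I, δ m * a = 0 := by
    intro a ha
    apply hsp
    intro r
    have hb : (r * δ m) * a ∈ I := I.mul_mem_left _ _ ha
    have h := key4 a ha _ hb
    calc δ m * a * r * (δ m * a) = δ m * (a * (r * δ m * a)) := by noncomm_ring
      _ = 0 := h
  -- σ.symm (δ m) ∈ M
  have hmem : σ.symm (δ m) ∈ M := by
    rw [hM]
    constructor
    · intro i hi
      have h : σ (σ.symm (δ m) * i) = 0 := by
        rw [map_mul, RingEquiv.apply_symm_apply]
        exact key5 (σ i) (hσI i hi)
      exact σ.injective (by rw [h, map_zero])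
    · intro i hi
      have h : σ (i * σ.symm (δ m)) = 0 := by
        rw [map_mul, RingEquiv.apply_symm_apply]
        exact key3 i hi
      exact σ.injective (by rw [h, map_zero])
  rw [← hσM]
  exact ⟨σ.symm (δ m), hmem, σ.apply_symm_apply _⟩
end

section
/- Let R be a unital ring, X a set, and for each x ∈ X let σ_x be a ring endomorphism of R and δ_x a σ_x-derivation of R. Then there exists a ring S containing R as a subring and containing X, such that S is a free left R-module with basis the free monoid ⟨X⟩, and x·r = σ_x(r)·x + δ_x(r) for all x ∈ X and r ∈ R. -/
universe u v

/-- `S` (together with the embedding `ι : R → S` and `j : X → S`) is a free skew extension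
`R[X; 𝒢, 𝒟]`: it contains `R` via `ι`, satisfies the skew relations
`x·r = σₓ(r)·x + δₓ(r)`, and is a free left `R`-module with basis the free monoid on `X`
(every element has a unique representation as a finite left `R`-combination of monomials). -/
def IsFreeSkewExtension (R : Type*) [Ring R] (X : Type*) (σ : X → R →+* R)
    (δ : X → R →+ R) (S : Type*) [Ring S] (ι : R →+* S) (j : X → S) : Prop :=
  Function.Injective ι ∧
  (∀ (x : X) (r : R), j x * ι r = ι (σ x r) * j x + ι (δ x r)) ∧
  ∀ s : S, ∃! c : FreeMonoid X →₀ R,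
    s = c.sum fun w r => ι r * FreeMonoid.lift j w

namespace SkewExt

variable {R : Type u} [Ring R] {X : Type v} (σ : X → R →+* R) (δ : X → R →+ R)

abbrev M (R : Type u) [Ring R] (X : Type v) : Type (max u v) := FreeMonoid X →₀ R

noncomputable def ι : R →+* AddMonoid.End (M R X) := Module.toAddMonoidEnd R (M R X)

@[simp] lemma ι_single (r r' : R) (w : FreeMonoid X) :
    ι r (Finsupp.single w r') = Finsupp.single w (r * r') := by
  show r • Finsupp.single w r' = _
  rw [Finsupp.smul_single, smul_eq_mul]

noncomputable def jE (x : X) : AddMonoid.End (M R X) :=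
  (Finsupp.mapDomain.addMonoidHom (fun w => FreeMonoid.of x * w)).comp
    (Finsupp.mapRange.addMonoidHom (σ x).toAddMonoidHom) +
  Finsupp.mapRange.addMonoidHom (δ x)

@[simp] lemma jE_single (x : X) (r : R) (w : FreeMonoid X) :
    jE σ δ x (Finsupp.single w r) =
      Finsupp.single (FreeMonoid.of x * w) (σ x r) + Finsupp.single w (δ x r) := by
  show (Finsupp.mapDomain.addMonoidHom fun w => FreeMonoid.of x * w)
      (Finsupp.mapRange.addMonoidHom (σ x).toAddMonoidHom (Finsupp.single w r)) +
      Finsupp.mapRange.addMonoidHom (δ x) (Finsupp.single w r) = _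
  simp only [Finsupp.mapRange.addMonoidHom_apply, Finsupp.mapDomain.addMonoidHom_apply,
    RingHom.toAddMonoidHom_eq_coe, AddMonoidHom.coe_coe,
    Finsupp.mapRange_single, Finsupp.mapDomain_single]

noncomputable def W : FreeMonoid X →* AddMonoid.End (M R X) := FreeMonoid.lift (jE σ δ)

@[simp] lemma W_of (x : X) : W σ δ (FreeMonoid.of x) = jE σ δ x :=
  FreeMonoid.lift_eval_of _ _

noncomputable def Φ : M R X →+ AddMonoid.End (M R X) :=
  Finsupp.liftAddHom fun w => (AddMonoidHom.mulRight (W σ δ w)).comp (ι.toAddMonoidHom)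

@[simp] lemma Φ_single (w : FreeMonoid X) (r : R) :
    Φ σ δ (Finsupp.single w r) = ι r * W σ δ w := by
  simp [Φ]

lemma W_eval (hδ : ∀ x, IsSkewDerivation (σ x) (δ x)) (w : FreeMonoid X) :
    W σ δ w (Finsupp.single (1 : FreeMonoid X) (1 : R)) = Finsupp.single w 1 := by
  have hδ1 : ∀ x : X, δ x 1 = 0 := fun x => by
    have h := hδ x 1 1
    simp only [mul_one, map_one, one_mul] at h
    exact right_eq_add.mp h
  induction w using FreeMonoid.inductionOn' with
  | one => rfl
  | of_mul x w ih =>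
      rw [map_mul]
      show jE σ δ x (W σ δ w _) = _
      rw [ih, jE_single, map_one, hδ1, Finsupp.single_zero, add_zero]

lemma Φ_eval (hδ : ∀ x, IsSkewDerivation (σ x) (δ x)) (c : M R X) :
    Φ σ δ c (Finsupp.single (1 : FreeMonoid X) (1 : R)) = c := by
  induction c using Finsupp.induction with
  | zero => simp
  | single_add w r f hw hr ih =>
      rw [map_add]
      show Φ σ δ (Finsupp.single w r) _ + Φ σ δ f _ = _
      rw [ih, Φ_single]
      show ι r (W σ δ w _) + f = _
      rw [W_eval σ δ hδ, ι_single, mul_one]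


lemma hcomm (hδ : ∀ x, IsSkewDerivation (σ x) (δ x)) (x : X) (r : R) :
    jE σ δ x * (ι r : AddMonoid.End (M R X)) = ι (σ x r) * jE σ δ x + ι (δ x r) := by
  refine Finsupp.addHom_ext fun w r' => ?_
  show jE σ δ x (ι r (Finsupp.single w r')) =
    ι (σ x r) (jE σ δ x (Finsupp.single w r')) + ι (δ x r) (Finsupp.single w r')
  rw [ι_single, jE_single, jE_single, map_add, ι_single, ι_single, ι_single, map_mul,
    hδ x r r', Finsupp.single_add]
  abel

lemma iota_mul_Φ (r : R) (c : M R X) :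
    (ι r : AddMonoid.End (M R X)) * Φ σ δ c = Φ σ δ (r • c) := by
  induction c using Finsupp.induction with
  | zero => simp
  | single_add w r' f hw hr ih =>
      rw [smul_add, map_add, map_add, mul_add, ih, Finsupp.smul_single, smul_eq_mul,
        Φ_single, Φ_single, ← mul_assoc, ← map_mul]

lemma j_mul_Φ (hδ : ∀ x, IsSkewDerivation (σ x) (δ x)) (x : X) (c : M R X) :
    ∃ d, jE σ δ x * Φ σ δ c = Φ σ δ d := by
  induction c using Finsupp.induction with
  | zero => exact ⟨0, by simp⟩
  | single_add w r f hw hr ih =>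
      obtain ⟨d, hd⟩ := ih
      refine ⟨Finsupp.single (FreeMonoid.of x * w) (σ x r) + Finsupp.single w (δ x r) + d, ?_⟩
      rw [map_add, mul_add, hd, Φ_single, map_add, map_add, Φ_single, Φ_single,
        ← mul_assoc, hcomm σ δ hδ x r, add_mul, mul_assoc]
      have : jE σ δ x * W σ δ w = W σ δ (FreeMonoid.of x * w) := by
        rw [map_mul, W_of]
      rw [this]

lemma W_mul_Φ (hδ : ∀ x, IsSkewDerivation (σ x) (δ x)) (w : FreeMonoid X) (c : M R X) :
    ∃ d, W σ δ w * Φ σ δ c = Φ σ δ d := by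
  induction w using FreeMonoid.inductionOn' with
  | one => exact ⟨c, by rw [map_one, one_mul]⟩
  | of_mul x w ih =>
      obtain ⟨d, hd⟩ := ih
      obtain ⟨e, he⟩ := j_mul_Φ σ δ hδ x d
      refine ⟨e, ?_⟩
      rw [map_mul, mul_assoc, hd, W_of]
      exact he

lemma Φ_mul_Φ (hδ : ∀ x, IsSkewDerivation (σ x) (δ x)) (c c' : M R X) :
    ∃ d, Φ σ δ c * Φ σ δ c' = Φ σ δ d := by
  induction c using Finsupp.induction with
  | zero => exact ⟨0, by simp⟩
  | single_add w r f hw hr ih =>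
      obtain ⟨d, hd⟩ := ih
      obtain ⟨e, he⟩ := W_mul_Φ σ δ hδ w c'
      refine ⟨r • e + d, ?_⟩
      rw [map_add, add_mul, hd, Φ_single, mul_assoc, he, iota_mul_Φ, map_add]

noncomputable def T (hδ : ∀ x, IsSkewDerivation (σ x) (δ x)) :
    Subring (AddMonoid.End (M R X)) where
  carrier := Set.range (Φ σ δ)
  zero_mem' := ⟨0, map_zero _⟩
  one_mem' := ⟨Finsupp.single 1 1, by rw [Φ_single, map_one, map_one, one_mul]⟩
  add_mem' := by rintro a b ⟨c, rfl⟩ ⟨d, rfl⟩; exact ⟨c + d, map_add _ _ _⟩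
  neg_mem' := by rintro a ⟨c, rfl⟩; exact ⟨-c, map_neg _ _⟩
  mul_mem' := by
    rintro a b ⟨c, rfl⟩ ⟨d, rfl⟩
    obtain ⟨e, he⟩ := Φ_mul_Φ σ δ hδ c d
    exact ⟨e, he.symm⟩

lemma iota_mem (hδ : ∀ x, IsSkewDerivation (σ x) (δ x)) (r : R) :
    (ι r : AddMonoid.End (M R X)) ∈ T σ δ hδ :=
  ⟨Finsupp.single 1 r, by rw [Φ_single, map_one, mul_one]⟩

lemma jE_mem (hδ : ∀ x, IsSkewDerivation (σ x) (δ x)) (x : X) :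
    jE σ δ x ∈ T σ δ hδ :=
  ⟨Finsupp.single (FreeMonoid.of x) 1, by rw [Φ_single, map_one, one_mul, W_of]⟩

end SkewExt

set_option synthInstance.maxHeartbeats 1000000 in
set_option maxHeartbeats 2000000 in
/-- free skew extensions exist: given endomorphisms `σₓ` and
`σₓ`-derivations `δₓ` of a unital ring `R`, there is a ring `S` containing `R` and `X`
which is a free left `R`-module on the free monoid `⟨X⟩` and satisfies
`x·r = σₓ(r)·x + δₓ(r)`. -/
theorem stmt6 {R : Type u} [Ring R] {X : Type v} (σ : X → R →+* R) (δ : X → R →+ R)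
    (hδ : ∀ x, IsSkewDerivation (σ x) (δ x)) :
    ∃ (S : Type (max u v)) (_ : Ring S) (ι : R →+* S) (j : X → S),
      IsFreeSkewExtension R X σ δ S ι j := by
  classical
  open SkewExt in
  refine ⟨T σ δ hδ, inferInstance,
    RingHom.codRestrict (SkewExt.ι (R := R) (X := X)) (T σ δ hδ) (iota_mem σ δ hδ),
    fun x => ⟨jE σ δ x, jE_mem σ δ hδ x⟩, ?_, ?_, ?_⟩
  · intro a b h
    have h1 : (SkewExt.ι a : AddMonoid.End (M R X)) = SkewExt.ι b := congrArg Subtype.val h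
    have h2 := congrArg (fun f : AddMonoid.End (M R X) =>
      f (Finsupp.single (1 : FreeMonoid X) (1 : R))) h1
    simp only [ι_single, mul_one] at h2
    exact Finsupp.single_injective _ h2
  · intro x r
    exact Subtype.ext (hcomm σ δ hδ x r)
  · intro s
    obtain ⟨c, hc⟩ := s.2
    set jT : X → T σ δ hδ := fun x => ⟨jE σ δ x, jE_mem σ δ hδ x⟩ with hjT
    have hW : ∀ w : FreeMonoid X, ((FreeMonoid.lift jT w : T σ δ hδ) : AddMonoid.End (M R X))
        = W σ δ w := by
      intro w
      induction w using FreeMonoid.inductionOn' with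
      | one => rw [map_one, map_one]; rfl
      | of_mul x w ih =>
          rw [map_mul, map_mul, W_of, FreeMonoid.lift_eval_of]
          show (jE σ δ x : AddMonoid.End (M R X)) * _ = _
          rw [ih]
    have sum_val : ∀ c : M R X,
        ((c.sum fun w r => RingHom.codRestrict (SkewExt.ι (R := R) (X := X)) (T σ δ hδ)
          (iota_mem σ δ hδ) r * FreeMonoid.lift jT w : T σ δ hδ) : AddMonoid.End (M R X))
        = Φ σ δ c := by
      intro c
      rw [show ∀ t : T σ δ hδ, (t : AddMonoid.End (M R X)) = (T σ δ hδ).subtype t from fun _ => rfl,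
        map_finsuppSum]
      have : (c.sum fun w r => (T σ δ hδ).subtype
          (RingHom.codRestrict (SkewExt.ι (R := R) (X := X)) (T σ δ hδ)
            (iota_mem σ δ hδ) r * FreeMonoid.lift jT w))
          = c.sum fun w r => Φ σ δ (Finsupp.single w r) := by
        refine Finsupp.sum_congr fun w hw => ?_
        rw [Φ_single]
        show (SkewExt.ι (c w) : AddMonoid.End (M R X)) *
          ((FreeMonoid.lift jT w : T σ δ hδ) : AddMonoid.End (M R X)) = _
        rw [hW]
      rw [this, ← map_finsuppSum (Φ σ δ), Finsupp.sum_single]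
    refine ⟨c, Subtype.ext ?_, ?_⟩
    · rw [sum_val, hc]
    · intro y hy
      have h1 : Φ σ δ y = Φ σ δ c := by
        rw [← sum_val y, ← hy, hc]
      have := congrArg (fun f : AddMonoid.End (M R X) =>
        f (Finsupp.single (1 : FreeMonoid X) (1 : R))) h1
      simpa only [Φ_eval σ δ hδ] using this
end

section
/- Let S = R[X; 𝒢, 𝒟] be a free skew extension, T a ring, ψ: R → T a ring homomorphism, and φ: X → T a map satisfying φ(x)ψ(r) = ψ(σ_x(r))φ(x) + ψ(δ_x(r)) for all x ∈ X and r ∈ R. Then there exists a unique ring homomorphism ψ̄: S → T extending ψ and with ψ̄(x) = φ(x) for all x ∈ X. -/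
/-- universal mapping property of the free skew extension: a ring map
`ψ : R → T` together with `φ : X → T` satisfying the skew relations extends uniquely to a
ring homomorphism `S → T`. -/
theorem stmt7 {R : Type*} [Ring R] {X : Type*} (σ : X → R →+* R) (δ : X → R →+ R)
    (hδ : ∀ x, IsSkewDerivation (σ x) (δ x))
    {S : Type*} [Ring S] (ι : R →+* S) (j : X → S)
    (hS : IsFreeSkewExtension R X σ δ S ι j)
    {T : Type*} [Ring T] (ψ : R →+* T) (φ : X → T)
    (hrel : ∀ (x : X) (r : R), φ x * ψ r = ψ (σ x r) * φ x + ψ (δ x r)) :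
    ∃! Ψ : S →+* T, Ψ.comp ι = ψ ∧ ∀ x, Ψ (j x) = φ x := by
  obtain ⟨hinj, hcomm, hfree⟩ := hS
  let E : (FreeMonoid X →₀ R) →+ S := AddMonoidHom.mk'
    (fun c => c.sum fun w r => ι r * FreeMonoid.lift j w)
    (fun c c' => Finsupp.sum_add_index' (fun w => by simp) (fun w r r' => by
      rw [map_add, add_mul]))
  let G : (FreeMonoid X →₀ R) →+ T := AddMonoidHom.mk'
    (fun c => c.sum fun w r => ψ r * FreeMonoid.lift φ w)
    (fun c c' => Finsupp.sum_add_index' (fun w => by simp) (fun w r r' => by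
      rw [map_add, add_mul]))
  have hE : ∀ c, E c = c.sum fun w r => ι r * FreeMonoid.lift j w := fun _ => rfl
  have hG : ∀ c, G c = c.sum fun w r => ψ r * FreeMonoid.lift φ w := fun _ => rfl
  have hEs : ∀ w r, E (Finsupp.single w r) = ι r * FreeMonoid.lift j w := fun w r => by
    rw [hE]; exact Finsupp.sum_single_index (by simp)
  have hGs : ∀ w r, G (Finsupp.single w r) = ψ r * FreeMonoid.lift φ w := fun w r => by
    rw [hG]; exact Finsupp.sum_single_index (by simp)
  have hbij : Function.Bijective E := by
    constructor
    · intro c c' h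
      obtain ⟨d, hd, hu⟩ := hfree (E c)
      exact (hu c rfl).trans (hu c' h).symm
    · intro s
      obtain ⟨c, hc, -⟩ := hfree s
      exact ⟨c, hc.symm⟩
  let e : (FreeMonoid X →₀ R) ≃+ S := AddEquiv.ofBijective E hbij
  let Ψ₀ : S →+ T := G.comp e.symm.toAddMonoidHom
  have hΨE : ∀ c, Ψ₀ (E c) = G c := by
    intro c
    show G (e.symm (E c)) = G c
    rw [show e.symm (E c) = c from e.symm_apply_apply c]
  have hrep : ∀ s : S, ∃ c, s = E c := fun s => ((hfree s).exists.imp fun c hc => hc)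
  have hgen : ∀ (w : FreeMonoid X) (r : R),
      Ψ₀ (ι r * FreeMonoid.lift j w) = ψ r * FreeMonoid.lift φ w := fun w r => by
    rw [← hEs, hΨE, hGs]
  have hscal : ∀ (r : R) (s : S), Ψ₀ (ι r * s) = ψ r * Ψ₀ s := by
    intro r s
    obtain ⟨c, rfl⟩ := hrep s
    rw [hΨE, hG, Finsupp.mul_sum, hE, Finsupp.mul_sum, map_finsuppSum]
    refine Finsupp.sum_congr fun w hw => ?_
    rw [← mul_assoc, ← map_mul, hgen, map_mul, mul_assoc]
  have hx : ∀ (x : X) (s : S), Ψ₀ (j x * s) = φ x * Ψ₀ s := by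
    intro x s
    obtain ⟨c, rfl⟩ := hrep s
    rw [hΨE, hG, Finsupp.mul_sum, hE, Finsupp.mul_sum, map_finsuppSum]
    refine Finsupp.sum_congr fun w hw => ?_
    have h1 : j x * (ι (c w) * FreeMonoid.lift j w)
        = ι (σ x (c w)) * FreeMonoid.lift j (FreeMonoid.of x * w)
          + ι (δ x (c w)) * FreeMonoid.lift j w := by
      rw [← mul_assoc, hcomm, add_mul, map_mul, FreeMonoid.lift_eval_of, mul_assoc]
    rw [h1, map_add, hgen, hgen, map_mul, FreeMonoid.lift_eval_of, ← mul_assoc, ← add_mul,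
      ← hrel, mul_assoc]
  have hword : ∀ (w : FreeMonoid X) (s : S),
      Ψ₀ (FreeMonoid.lift j w * s) = FreeMonoid.lift φ w * Ψ₀ s := by
    intro w
    induction w using FreeMonoid.recOn with
    | one => intro s; simp
    | of_mul x w ihw =>
      intro s
      rw [map_mul (FreeMonoid.lift j), map_mul (FreeMonoid.lift φ), FreeMonoid.lift_eval_of,
        FreeMonoid.lift_eval_of, mul_assoc, hx, ihw, mul_assoc]
  have hmul : ∀ s t : S, Ψ₀ (s * t) = Ψ₀ s * Ψ₀ t := by
    intro s t
    obtain ⟨c, rfl⟩ := hrep s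
    rw [hΨE, hG, Finsupp.sum_mul, hE, Finsupp.sum_mul, map_finsuppSum]
    refine Finsupp.sum_congr fun w hw => ?_
    rw [mul_assoc, hscal, hword, mul_assoc]
  have hone : Ψ₀ 1 = 1 := by
    rw [show (1 : S) = ι 1 * FreeMonoid.lift j (1 : FreeMonoid X) by simp, hgen]
    simp
  have hι : ∀ r, Ψ₀ (ι r) = ψ r := by
    intro r
    rw [show ι r = ι r * FreeMonoid.lift j (1 : FreeMonoid X) by simp, hgen]
    simp
  have hj : ∀ x, Ψ₀ (j x) = φ x := by
    intro x
    rw [show j x = ι (1 : R) * FreeMonoid.lift j (FreeMonoid.of x) by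
      simp [FreeMonoid.lift_eval_of], hgen]
    simp [FreeMonoid.lift_eval_of]
  refine ⟨{ toFun := Ψ₀, map_one' := hone, map_mul' := hmul,
            map_zero' := Ψ₀.map_zero, map_add' := Ψ₀.map_add }, ⟨?_, ?_⟩, ?_⟩
  · ext r; exact hι r
  · intro x; exact hj x
  · rintro Ψ' ⟨h1, h2⟩
    have hword' : ∀ w : FreeMonoid X, Ψ' (FreeMonoid.lift j w) = FreeMonoid.lift φ w := by
      intro w
      induction w using FreeMonoid.recOn with
      | one => simp
      | of_mul x w ihw =>
        rw [map_mul (FreeMonoid.lift j), map_mul Ψ', FreeMonoid.lift_eval_of, h2, ihw,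
          map_mul (FreeMonoid.lift φ), FreeMonoid.lift_eval_of]
    ext s
    show Ψ' s = Ψ₀ s
    obtain ⟨c, rfl⟩ := hrep s
    rw [hΨE, hG, hE, map_finsuppSum]
    refine Finsupp.sum_congr fun w hw => ?_
    rw [map_mul Ψ', hword']
    exact congrArg (· * FreeMonoid.lift φ w) (RingHom.congr_fun h1 (c w))
end

section
/- Let S = R[X; 𝒢, 𝒟] be a free skew extension where X has at least two elements. Then S is not a left Goldie ring; specifically, for distinct x, y ∈ X, the sum of left ideals Σ_{n≥1} S·x·yⁿ is a direct sum of nonzero left ideals. -/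
open Classical in
private noncomputable def tcount {X : Type*} (y : X) : List X → ℕ
  | [] => 0
  | a :: l => if a = y then tcount y l + 1 else 0

private lemma tcount_replicate_cons {X : Type*} {y x : X} (hxy : x ≠ y) (k : ℕ) (t : List X) :
    tcount y (List.replicate k y ++ x :: t) = k := by
  induction k with
  | zero => simp [tcount, hxy]
  | succ k ih => simpa [List.replicate_succ, tcount] using ih

/-- `R` contains no infinite direct sum of nonzero left ideals. -/
def NoInfiniteDirectSumOfLeftIdeals (R : Type*) [Ring R] : Prop :=
  ¬ ∃ f : ℕ → Ideal R, (∀ n, f n ≠ ⊥) ∧ iSupIndep f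

/-- `R` is a left Goldie ring. -/
def IsLeftGoldie (R : Type*) [Ring R] : Prop :=
  NoInfiniteDirectSumOfLeftIdeals R ∧ AccLeftAnnihilators R

/-- if `X` has two distinct elements `x ≠ y`, the free skew extension
`S = R[X; 𝒢, 𝒟]` (with the `σ` automorphisms) is not left Goldie: the left ideals
`S·x·yⁿ`, `n ≥ 1`, are nonzero and form an infinite direct sum. -/
theorem stmt9 {R : Type*} [Ring R] [Nontrivial R] {X : Type*}
    (σ : X → R →+* R) (hσ : ∀ x, Function.Bijective (σ x)) (δ : X → R →+ R)
    (hδ : ∀ x, IsSkewDerivation (σ x) (δ x))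
    {S : Type*} [Ring S] (ι : R →+* S) (j : X → S)
    (hS : IsFreeSkewExtension R X σ δ S ι j)
    (x y : X) (hxy : x ≠ y) :
    (∀ n : ℕ, (Ideal.span {j x * j y ^ (n + 1)} : Ideal S) ≠ ⊥) ∧
    iSupIndep (fun n : ℕ => (Ideal.span {j x * j y ^ (n + 1)} : Ideal S)) ∧
    ¬ IsLeftGoldie S := by
  classical
  obtain ⟨hι, hrel, hfree⟩ := hS
  set E : (FreeMonoid X →₀ R) → S := fun c => c.sum fun w r => ι r * FreeMonoid.lift j w with hE
  have hEadd : ∀ c d, E (c + d) = E c + E d := fun c d =>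
    Finsupp.sum_add_index' (fun w => by simp) (fun w r₁ r₂ => by rw [map_add, add_mul])
  have hE0 : E 0 = 0 := Finsupp.sum_zero_index
  choose rep hrepE₀ hrepU₀ using fun s => hfree s
  have hrepE : ∀ s : S, s = E (rep s) := hrepE₀
  have hrepU : ∀ (s : S) (c : FreeMonoid X →₀ R), s = E c → c = rep s := hrepU₀
  have rep0 : rep (0 : S) = 0 := (hrepU 0 0 hE0.symm).symm
  have repadd : ∀ a b : S, rep (a + b) = rep a + rep b := by
    intro a b
    refine (hrepU (a + b) (rep a + rep b) ?_).symm
    rw [hEadd, ← hrepE, ← hrepE]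
  let repHom : S →+ (FreeMonoid X →₀ R) := ⟨⟨rep, rep0⟩, repadd⟩
  have hEmul : ∀ (c : FreeMonoid X →₀ R) (w : FreeMonoid X),
      E (c.mapDomain (· * w)) = E c * FreeMonoid.lift j w := by
    intro c w
    show (c.mapDomain (· * w)).sum (fun v r => ι r * FreeMonoid.lift j v)
      = (c.sum fun v r => ι r * FreeMonoid.lift j v) * FreeMonoid.lift j w
    rw [Finsupp.sum_mapDomain_index_inj (mul_left_injective w), Finsupp.sum_mul]
    refine Finsupp.sum_congr fun v _ => ?_
    rw [map_mul, mul_assoc]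
  set g : ℕ → S := fun n => j x * j y ^ (n + 1) with hg
  set w : ℕ → FreeMonoid X := fun n => FreeMonoid.of x * FreeMonoid.of y ^ (n + 1) with hw
  have hgw : ∀ n, FreeMonoid.lift j (w n) = g n := by
    intro n
    show FreeMonoid.lift j (FreeMonoid.of x * FreeMonoid.of y ^ (n + 1)) = j x * j y ^ (n + 1)
    simp [map_mul, map_pow]
  have htp : ∀ m : ℕ, (FreeMonoid.of y ^ m).toList = List.replicate m y := by
    intro m
    induction m with
    | zero => rfl
    | succ m ih =>
        rw [pow_succ, FreeMonoid.toList_mul, ih, FreeMonoid.toList_of, ← List.replicate_succ']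
  set T : FreeMonoid X → ℕ := fun v => tcount y v.toList.reverse with hT
  have hTw : ∀ (u : FreeMonoid X) (n : ℕ), T (u * w n) = n + 1 := by
    intro u n
    show tcount y (FreeMonoid.toList (u * w n)).reverse = n + 1
    have h1 : FreeMonoid.toList (u * w n)
        = u.toList ++ ([x] ++ List.replicate (n + 1) y) := by
      show FreeMonoid.toList (u * (FreeMonoid.of x * FreeMonoid.of y ^ (n + 1)))
        = u.toList ++ ([x] ++ List.replicate (n + 1) y)
      rw [FreeMonoid.toList_mul, FreeMonoid.toList_mul, FreeMonoid.toList_of, htp]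
    rw [h1]
    simp only [List.reverse_append, List.reverse_cons, List.reverse_replicate,
      List.reverse_singleton, List.singleton_append, List.append_assoc, List.cons_append,
      List.nil_append]
    exact tcount_replicate_cons hxy (n + 1) _
  have hsup : ∀ (s : S) (n : ℕ) (v : FreeMonoid X),
      v ∈ (rep (s * g n)).support → T v = n + 1 := by
    intro s n v hv
    have hrepmul : rep (s * g n) = (rep s).mapDomain (· * w n) := by
      refine (hrepU (s * g n) _ ?_).symm
      rw [hEmul, hgw, ← hrepE s]
    rw [hrepmul] at hv
    obtain ⟨u, _, rfl⟩ := Finset.mem_image.mp (Finsupp.mapDomain_support hv)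
    exact hTw u n
  have hnz : ∀ n : ℕ, (Ideal.span {g n} : Ideal S) ≠ ⊥ := by
    intro n hbot
    have hgz : g n = 0 := Submodule.span_singleton_eq_bot.mp hbot
    have h1 : g n = E (Finsupp.single (w n) 1) := by
      show g n = (Finsupp.single (w n) (1 : R)).sum fun v r => ι r * FreeMonoid.lift j v
      rw [Finsupp.sum_single_index (by simp), map_one, one_mul, hgw]
    have h2 : Finsupp.single (w n) (1 : R) = rep (g n) := hrepU _ _ h1
    rw [hgz, rep0] at h2
    exact one_ne_zero (Finsupp.single_eq_zero.mp h2)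
  have hkey : ∀ (n : ℕ) (z : S), z ∈ (Ideal.span {g n} : Ideal S) →
      z ∈ Submodule.span S {a | ∃ m, m ≠ n ∧ a = g m} → z = 0 := by
    intro n z h1 h2
    obtain ⟨s, hs⟩ := Submodule.mem_span_singleton.mp h1
    have hz' : z = s * g n := by rw [← hs, smul_eq_mul]
    obtain ⟨c, hcsup, hcsum⟩ := Submodule.mem_span_set.mp h2
    have hrz : rep z = ∑ a ∈ c.support, rep (c a • a) := by
      conv_lhs => rw [← hcsum]
      exact map_sum repHom _ _
    have hrz0 : rep z = 0 := by
      by_contra hne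
      obtain ⟨v, hv⟩ := Finsupp.support_nonempty_iff.mpr hne
      have hv1 : T v = n + 1 := by
        refine hsup s n v ?_
        rwa [← hz']
      have hvb := Finsupp.support_finset_sum (hrz ▸ hv)
      obtain ⟨a, ha, hva⟩ := Finset.mem_biUnion.mp hvb
      obtain ⟨m, hm, rfl⟩ := hcsup (Finset.mem_coe.mpr ha)
      rw [smul_eq_mul] at hva
      have hv2 : T v = m + 1 := hsup (c (g m)) m v hva
      omega
    rw [hrepE z, hrz0, hE0]
  have hind : iSupIndep (fun n : ℕ => (Ideal.span {g n} : Ideal S)) := by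
    intro i
    have hle : (⨆ (m) (_ : m ≠ i), (Ideal.span {g m} : Ideal S)) ≤
        Submodule.span S {a | ∃ m, m ≠ i ∧ a = g m} := by
      refine iSup_le fun m => iSup_le fun hm => Submodule.span_mono ?_
      exact Set.singleton_subset_iff.mpr ⟨m, hm, rfl⟩
    rw [disjoint_iff_inf_le]
    intro z hz
    exact (Submodule.mem_bot S).mpr (hkey i z hz.1 (hle hz.2))
  exact ⟨hnz, hind, fun h => h.1 ⟨_, hnz, hind⟩⟩
end

section
/- Let R be a semiprime left Goldie ring and S = R[X; 𝒢, 𝒟] a free skew extension of R, where all σ_x are automorphisms. Let A be a nonzero two-sided ideal of S and let I be the additive subgroup of R generated by the leading coefficients (with respect to a fixed monomial order extending degree) of nonzero elements of A. Then I is a two-sided ideal of R. -/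
/-- The set of leading coefficients (w.r.t. the order on monomials) of the nonzero
elements of a subset `A` of the free skew extension. -/
def LeadingCoeffSet {R : Type*} [Ring R] {X : Type*} [LinearOrder (FreeMonoid X)]
    {S : Type*} [Ring S] (ι : R →+* S) (j : X → S) (A : Set S) : Set R :=
  {r | ∃ s ∈ A, ∃ c : FreeMonoid X →₀ R,
    s = c.sum (fun w a => ι a * FreeMonoid.lift j w) ∧
    ∃ w ∈ c.support, (∀ v ∈ c.support, v ≤ w) ∧ r = c w}

section SkewAux

variable {R : Type*} [Ring R] {X : Type*} [LinearOrder (FreeMonoid X)]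
  {S : Type*} [Ring S]

/-- The composite automorphism `π_w = σ_{x₁} ∘ ⋯ ∘ σ_{x_n}` for `w = x₁⋯x_n`. -/
def piAut (σ : X → R →+* R) : FreeMonoid X →* (R →+* R) :=
  FreeMonoid.lift σ

lemma piAut_bijective (σ : X → R →+* R) (hσ : ∀ x, Function.Bijective (σ x))
    (w : FreeMonoid X) : Function.Bijective (piAut σ w) := by
  induction w using FreeMonoid.inductionOn' with
  | one => simpa [piAut] using Function.bijective_id
  | of_mul x v ih =>
      rw [map_mul]
      have hx : piAut σ (FreeMonoid.of x) = σ x := FreeMonoid.lift_eval_of σ x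
      rw [hx]
      simpa [RingHom.coe_mul] using (hσ x).comp ih

variable (σ : X → R →+* R) (δ : X → R →+ R) (ι : R →+* S) (j : X → S)

lemma fsum_eq {α M N : Type*} [Zero M] [AddCommMonoid N] (f : α →₀ M) (g : α → M → N) :
    f.sum g = ∑ a ∈ f.support, g a (f a) := rfl

lemma keyA
    (hdeg : ∀ v w : FreeMonoid X, FreeMonoid.length v < FreeMonoid.length w → v < w)
    (hmul : ∀ u v w : FreeMonoid X, v < w → u * v < u * w ∧ v * u < w * u)
    (hrel : ∀ (x : X) (r : R), j x * ι r = ι (σ x r) * j x + ι (δ x r))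
    (w : FreeMonoid X) :
    ∀ b : R, ∃ c : FreeMonoid X →₀ R,
      FreeMonoid.lift j w * ι b = c.sum (fun v a => ι a * FreeMonoid.lift j v) ∧
      (∀ v ∈ c.support, v ≤ w ∧ v.length ≤ w.length) ∧ c w = piAut σ w b := by
  induction w using FreeMonoid.inductionOn' with
  | one =>
      intro b
      refine ⟨Finsupp.single 1 b, ?_, ?_, ?_⟩
      · rw [Finsupp.sum_single_index (by simp)]; simp
      · intro v hv
        have : v = 1 := by
          have := Finsupp.support_single_subset hv
          simpa using this
        simp [this]
      · simp [piAut]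
  | of_mul x w ih =>
      intro b
      obtain ⟨c', h1, h2, h3⟩ := ih b
      set c : FreeMonoid X →₀ R :=
        ∑ v ∈ c'.support,
          (Finsupp.single (FreeMonoid.of x * v) (σ x (c' v)) +
            Finsupp.single v (δ x (c' v))) with hc
      have hf0 : ∀ v : FreeMonoid X, (fun (v : FreeMonoid X) (a : R) =>
          ι a * FreeMonoid.lift j v) v 0 = 0 := fun v => by simp
      have hfadd : ∀ (v : FreeMonoid X) (a a' : R),
          ι (a + a') * FreeMonoid.lift j v
            = ι a * FreeMonoid.lift j v + ι a' * FreeMonoid.lift j v := fun v a a' => by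
        rw [map_add, add_mul]
      refine ⟨c, ?_, ?_, ?_⟩
      · rw [hc, ← Finsupp.sum_finsetSum_index hf0 hfadd]
        have e1 : FreeMonoid.lift j (FreeMonoid.of x * w) * ι b
            = j x * (FreeMonoid.lift j w * ι b) := by
          rw [map_mul, FreeMonoid.lift_eval_of, mul_assoc]
        rw [e1, h1, Finsupp.mul_sum, fsum_eq]
        refine Finset.sum_congr rfl fun v hv => ?_
        rw [Finsupp.sum_add_index' hf0 hfadd, Finsupp.sum_single_index (hf0 _),
          Finsupp.sum_single_index (hf0 _)]
        rw [← mul_assoc, hrel x (c' v), add_mul, mul_assoc, map_mul,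
          FreeMonoid.lift_eval_of]
      · intro u hu
        have hcu : c u ≠ 0 := Finsupp.mem_support_iff.mp hu
        rw [hc, Finset.sum_apply'] at hcu
        obtain ⟨v, hv, hvne⟩ := Finset.exists_ne_zero_of_sum_ne_zero hcu
        rw [Finsupp.add_apply, Finsupp.single_apply, Finsupp.single_apply] at hvne
        have hv2 := h2 v hv
        have hlen : (FreeMonoid.of x * w).length = w.length + 1 := by
          rw [FreeMonoid.length_mul, FreeMonoid.length_of]; omega
        by_cases e1 : FreeMonoid.of x * v = u
        · subst e1
          constructor
          · rcases lt_or_eq_of_le hv2.1 with h | h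
            · exact le_of_lt (hmul (FreeMonoid.of x) v w h).1
            · rw [h]
          · simp only [FreeMonoid.length_mul, FreeMonoid.length_of]
            omega
        · by_cases e2 : v = u
          · subst e2
            have hlt : v.length < (FreeMonoid.of x * w).length := by
              rw [hlen]; omega
            exact ⟨le_of_lt (hdeg _ _ hlt), le_of_lt hlt⟩
          · rw [if_neg e1, if_neg e2, add_zero] at hvne
            exact absurd rfl hvne
      · rw [hc, Finset.sum_apply']
        have key : ∀ v ∈ c'.support,
            ((Finsupp.single (FreeMonoid.of x * v) (σ x (c' v)) +
              Finsupp.single v (δ x (c' v))) (FreeMonoid.of x * w))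
            = if v = w then σ x (c' v) else 0 := by
          intro v hv
          rw [Finsupp.add_apply, Finsupp.single_apply, Finsupp.single_apply]
          have hne : v ≠ FreeMonoid.of x * w := by
            intro e
            have hl := (h2 v hv).2
            rw [e, FreeMonoid.length_mul, FreeMonoid.length_of] at hl
            omega
          rw [if_neg hne, add_zero]
          by_cases e : v = w
          · subst e; simp
          · rw [if_neg (fun h => e (mul_left_cancel h)), if_neg e]
        rw [Finset.sum_congr rfl key, Finset.sum_ite_eq' c'.support w
          (fun v => σ x (c' v))]
        have hpi : piAut σ (FreeMonoid.of x * w) b = σ x (piAut σ w b) := by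
          rw [map_mul]; rfl
        rw [hpi, ← h3]
        by_cases hw : w ∈ c'.support
        · rw [if_pos hw]
        · rw [if_neg hw, Finsupp.notMem_support_iff.mp hw, map_zero]

lemma keyB
    (hdeg : ∀ v w : FreeMonoid X, FreeMonoid.length v < FreeMonoid.length w → v < w)
    (hmul : ∀ u v w : FreeMonoid X, v < w → u * v < u * w ∧ v * u < w * u)
    (hrel : ∀ (x : X) (r : R), j x * ι r = ι (σ x r) * j x + ι (δ x r))
    (c : FreeMonoid X →₀ R) (w : FreeMonoid X)
    (hmax : ∀ v ∈ c.support, v ≤ w) (b : R) :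
    ∃ C : FreeMonoid X →₀ R,
      (c.sum fun v a => ι a * FreeMonoid.lift j v) * ι b
        = C.sum (fun v a => ι a * FreeMonoid.lift j v) ∧
      (∀ v ∈ C.support, v ≤ w) ∧ C w = c w * piAut σ w b := by
  choose d hd1 hd2 hd3 using fun v => keyA σ δ ι j hdeg hmul hrel v b
  set C : FreeMonoid X →₀ R :=
    ∑ v ∈ c.support, Finsupp.mapRange (fun a => c v * a) (mul_zero _) (d v) with hC
  have hf0 : ∀ v : FreeMonoid X, (fun (v : FreeMonoid X) (a : R) =>
      ι a * FreeMonoid.lift j v) v 0 = 0 := fun v => by simp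
  have hfadd : ∀ (v : FreeMonoid X) (a a' : R),
      ι (a + a') * FreeMonoid.lift j v
        = ι a * FreeMonoid.lift j v + ι a' * FreeMonoid.lift j v := fun v a a' => by
    rw [map_add, add_mul]
  refine ⟨C, ?_, ?_, ?_⟩
  · rw [hC, ← Finsupp.sum_finsetSum_index hf0 hfadd, Finsupp.sum_mul, fsum_eq]
    refine Finset.sum_congr rfl fun v hv => ?_
    rw [Finsupp.sum_mapRange_index hf0, mul_assoc, hd1 v, Finsupp.mul_sum]
    exact Finsupp.sum_congr fun u hu => by rw [map_mul, mul_assoc]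
  · intro u hu
    have hCu : C u ≠ 0 := Finsupp.mem_support_iff.mp hu
    rw [hC, Finset.sum_apply'] at hCu
    obtain ⟨v, hv, hvne⟩ := Finset.exists_ne_zero_of_sum_ne_zero hCu
    rw [Finsupp.mapRange_apply] at hvne
    have hdvu : d v u ≠ 0 := fun h => hvne (by rw [h, mul_zero])
    exact le_trans (hd2 v u (Finsupp.mem_support_iff.mpr hdvu)).1 (hmax v hv)
  · rw [hC, Finset.sum_apply']
    by_cases hw : w ∈ c.support
    · rw [Finset.sum_eq_single_of_mem w hw
        (fun v hv hne => ?_)]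
      · rw [Finsupp.mapRange_apply, hd3]
      · rw [Finsupp.mapRange_apply]
        have hz : d v w = 0 := by
          by_contra h
          exact hne (le_antisymm (hmax v hv)
            (hd2 v w (Finsupp.mem_support_iff.mpr h)).1)
        rw [hz, mul_zero]
    · rw [Finsupp.notMem_support_iff.mp hw, zero_mul]
      refine Finset.sum_eq_zero fun v hv => ?_
      rw [Finsupp.mapRange_apply]
      have hz : d v w = 0 := by
        by_contra h
        have h1 := (hd2 v w (Finsupp.mem_support_iff.mpr h)).1
        have : v = w := le_antisymm (hmax v hv) h1
        exact hw (this ▸ hv)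
      rw [hz, mul_zero]

end SkewAux

/-- let `R` be semiprime left Goldie, `S = R[X; 𝒢, 𝒟]` a free skew
extension with all `σₓ` automorphisms, `≤` a monomial order on `⟨X⟩` refining degree and
compatible with multiplication, `A` a nonzero two-sided ideal of `S`, and `I` the additive
subgroup of `R` generated by the leading coefficients of nonzero elements of `A`. Then `I`
is a two-sided ideal of `R`. -/
theorem stmt10 {R : Type*} [Ring R] (hsp : IsSemiprimeRing R) (hG : IsLeftGoldie R)
    {X : Type*} [LinearOrder (FreeMonoid X)]
    (hdeg : ∀ v w : FreeMonoid X, FreeMonoid.length v < FreeMonoid.length w → v < w)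
    (hmul : ∀ u v w : FreeMonoid X, v < w → u * v < u * w ∧ v * u < w * u)
    (σ : X → R →+* R) (hσ : ∀ x, Function.Bijective (σ x)) (δ : X → R →+ R)
    (hδ : ∀ x, IsSkewDerivation (σ x) (δ x))
    {S : Type*} [Ring S] (ι : R →+* S) (j : X → S)
    (hS : IsFreeSkewExtension R X σ δ S ι j)
    (A : TwoSidedIdeal S) (hA : A ≠ ⊥)
    (I : AddSubgroup R) (hI : I = AddSubgroup.closure (LeadingCoeffSet ι j (A : Set S))) :
    ∀ r ∈ I, ∀ a : R, a * r ∈ I ∧ r * a ∈ I := by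
  obtain ⟨-, hrel, -⟩ := hS
  subst hI
  have main : ∀ r ∈ LeadingCoeffSet ι j (A : Set S), ∀ a : R,
      a * r ∈ AddSubgroup.closure (LeadingCoeffSet ι j (A : Set S)) ∧
      r * a ∈ AddSubgroup.closure (LeadingCoeffSet ι j (A : Set S)) := by
    intro r hr a
    obtain ⟨s, hsA, c, hceq, w, hw, hmaxw, hrw⟩ := hr
    constructor
    · by_cases h : a * r = 0
      · rw [h]; exact zero_mem _
      · apply AddSubgroup.subset_closure
        refine ⟨ι a * s, A.mul_mem_left _ _ hsA,
          Finsupp.mapRange (fun t => a * t) (mul_zero a) c, ?_, w, ?_, ?_, ?_⟩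
        · rw [hceq, Finsupp.mul_sum, Finsupp.sum_mapRange_index (fun v => by simp)]
          exact Finsupp.sum_congr fun v hv => by rw [map_mul, mul_assoc]
        · rw [Finsupp.mem_support_iff, Finsupp.mapRange_apply, ← hrw]; exact h
        · intro v hv
          rw [Finsupp.mem_support_iff, Finsupp.mapRange_apply] at hv
          exact hmaxw v (Finsupp.mem_support_iff.mpr fun h0 => hv (by rw [h0, mul_zero]))
        · rw [Finsupp.mapRange_apply, ← hrw]
    · obtain ⟨b, hb⟩ := (piAut_bijective σ hσ w).surjective a
      obtain ⟨C, hC1, hC2, hC3⟩ := keyB σ δ ι j hdeg hmul hrel c w hmaxw b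
      by_cases h : r * a = 0
      · rw [h]; exact zero_mem _
      · apply AddSubgroup.subset_closure
        refine ⟨s * ι b, A.mul_mem_right _ _ hsA, C, ?_, w, ?_, hC2, ?_⟩
        · rw [hceq, hC1]
        · rw [Finsupp.mem_support_iff, hC3, ← hrw, hb]; exact h
        · rw [hC3, ← hrw, hb]
  intro r hr a
  refine AddSubgroup.closure_induction (fun x hx => main x hx a) ?_ ?_ ?_ hr
  · exact ⟨by simpa using zero_mem _, by simpa using zero_mem _⟩
  · rintro x y hx hy ⟨h1, h2⟩ ⟨h3, h4⟩
    exact ⟨by rw [mul_add]; exact add_mem h1 h3, by rw [add_mul]; exact add_mem h2 h4⟩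
  · rintro x hx ⟨h1, h2⟩
    exact ⟨by rw [mul_neg]; exact neg_mem h1, by rw [neg_mul]; exact neg_mem h2⟩
end

section
/- With the notation of the preceding setup (A a nonzero ideal of R[X; 𝒢, 𝒟], I the ideal of R generated additively by leading coefficients of elements of A, all σ_x automorphisms), one has σ_x(I) ⊆ I for every x ∈ X. -/
/-- with `A` a nonzero two-sided ideal of the free skew extension
`S = R[X; 𝒢, 𝒟]` (all `σₓ` automorphisms) and `I` the additive subgroup of `R` generated
by the leading coefficients of elements of `A` (w.r.t. a degree-refining monomial order),
one has `σₓ(I) ⊆ I` for every `x ∈ X`. -/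
theorem stmt11 {R : Type*} [Ring R] {X : Type*} [LinearOrder (FreeMonoid X)]
    (hdeg : ∀ v w : FreeMonoid X, FreeMonoid.length v < FreeMonoid.length w → v < w)
    (hmul : ∀ u v w : FreeMonoid X, v < w → u * v < u * w ∧ v * u < w * u)
    (σ : X → R →+* R) (hσ : ∀ x, Function.Bijective (σ x)) (δ : X → R →+ R)
    (hδ : ∀ x, IsSkewDerivation (σ x) (δ x))
    {S : Type*} [Ring S] (ι : R →+* S) (j : X → S)
    (hS : IsFreeSkewExtension R X σ δ S ι j)
    (A : TwoSidedIdeal S) (hA : A ≠ ⊥)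
    (I : AddSubgroup R) (hI : I = AddSubgroup.closure (LeadingCoeffSet ι j (A : Set S))) :
    ∀ r ∈ I, ∀ x : X, σ x r ∈ I := by
  subst hI
  intro r hr x
  induction hr using AddSubgroup.closure_induction with
  | zero => simpa using AddSubgroup.zero_mem _
  | add a b _ _ ha hb => rw [map_add]; exact AddSubgroup.add_mem _ ha hb
  | neg a _ ha => rw [map_neg]; exact AddSubgroup.neg_mem _ ha
  | mem a hamem =>
    refine AddSubgroup.subset_closure ?_
    obtain ⟨s, hsA, c, hsc, w, hw, hmax, hca⟩ := hamem
    have hinj : Function.Injective (fun u : FreeMonoid X => FreeMonoid.of x * u) :=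
      fun a b h => mul_left_cancel h
    set c' : FreeMonoid X →₀ R :=
      Finsupp.mapDomain (fun u => FreeMonoid.of x * u) (c.mapRange (σ x) (map_zero _)) +
        c.mapRange (δ x) (map_zero _) with hc'
    set W : FreeMonoid X := FreeMonoid.of x * w with hW
    -- lengths of support elements bounded
    have hlen : ∀ v ∈ c.support, FreeMonoid.length v ≤ FreeMonoid.length w := by
      intro v hv
      by_contra h
      exact absurd (hmax v hv) (not_le.mpr (hdeg _ _ (not_le.mp h)))
    have hlenW : ∀ v ∈ c.support, FreeMonoid.length v < FreeMonoid.length W := by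
      intro v hv
      have := hlen v hv
      simp only [hW, FreeMonoid.length_mul, FreeMonoid.length_of]
      omega
    have hcW : c W = 0 := by
      by_contra h
      exact absurd (hlenW W (Finsupp.mem_support_iff.mpr h)) (lt_irrefl _)
    have hc'W : c' W = σ x (c w) := by
      rw [hc', Finsupp.add_apply, Finsupp.mapDomain_apply hinj, Finsupp.mapRange_apply,
        Finsupp.mapRange_apply, hcW, map_zero, add_zero]
    have hWmem : W ∈ c'.support := by
      rw [Finsupp.mem_support_iff, hc'W]
      intro h
      exact Finsupp.mem_support_iff.mp hw ((hσ x).1 (h.trans (map_zero _).symm))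
    have hWmax : ∀ v ∈ c'.support, v ≤ W := by
      intro v hv
      have hv' := Finsupp.support_add hv
      rw [Finset.mem_union] at hv'
      rcases hv' with hv' | hv'
      · classical
        obtain ⟨u, hu, rfl⟩ := Finset.mem_image.mp (Finsupp.mapDomain_support hv')
        have hu' : u ∈ c.support := Finsupp.support_mapRange hu
        rcases lt_or_eq_of_le (hmax u hu') with h | h
        · exact le_of_lt (hmul _ _ _ h).1
        · rw [h]
      · exact le_of_lt (hdeg _ _ (hlenW v (Finsupp.support_mapRange hv')))
    -- representation of j x * s
    have hrep : j x * s = c'.sum fun w r => ι r * FreeMonoid.lift j w := by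
      rw [hsc, Finsupp.mul_sum, hc']
      rw [Finsupp.sum_add_index' (by intro a; simp) (by intro a b₁ b₂; rw [map_add, add_mul])]
      rw [Finsupp.sum_mapDomain_index (by intro b; simp)
        (by intro b m₁ m₂; rw [map_add, add_mul])]
      rw [Finsupp.sum_mapRange_index (by intro b; simp),
        Finsupp.sum_mapRange_index (by intro b; simp)]
      rw [Finsupp.sum, Finsupp.sum, Finsupp.sum, ← Finset.sum_add_distrib]
      refine Finset.sum_congr rfl fun u _ => ?_
      have : (FreeMonoid.lift j) (FreeMonoid.of x * u) = j x * FreeMonoid.lift j u := by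
        rw [map_mul, FreeMonoid.lift_eval_of]
      rw [this, ← mul_assoc, ← mul_assoc, hS.2.1 x (c u), add_mul, mul_assoc]
    exact ⟨j x * s, A.mul_mem_left _ _ hsA, c', hrep, W, hWmem, hWmax,
      by rw [hca, hc'W]⟩
end

section
/- Let R be an algebra over a field F, σ an automorphism and δ a σ-derivation with δσ = qσδ for some nonzero q ∈ F (a q-skew σ-derivation), and let I be a σ-stable ideal. Then for all a₁, …, a_n ∈ I, δⁿ(a₁a₂⋯a_n) = (n!)_q · σ^{n−1}δ(a₁) σ^{n−2}δ(a₂) ⋯ σδ(a_{n−1}) δ(a_n) + w for some w ∈ I, where (n!)_q = ∏_{i=1}^n (1 + q + ⋯ + q^{i−1}). -/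
section Aux

variable {F : Type*} [Field F] {R : Type*} [Ring R] [Algebra F R]

private lemma sig_iter_mul (σ : R ≃+* R) (k : ℕ) (x y : R) :
    (⇑σ)^[k] (x * y) = (⇑σ)^[k] x * (⇑σ)^[k] y := by
  induction k generalizing x y with
  | zero => simp
  | succ k ih => simp [Function.iterate_succ_apply', ih, map_mul]

private lemma sig_iter_mem (σ : R ≃+* R) (I : TwoSidedIdeal R) (hσI : ∀ a ∈ I, σ a ∈ I)
    (k : ℕ) {x : R} (hx : x ∈ I) : (⇑σ)^[k] x ∈ I := by
  induction k with
  | zero => simpa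
  | succ k ih => rw [Function.iterate_succ_apply']; exact hσI _ ih

private lemma smul_mem' (I : TwoSidedIdeal R) (c : F) {x : R} (hx : x ∈ I) : c • x ∈ I := by
  rw [Algebra.smul_def]; exact I.mul_mem_left _ _ hx

private lemma sig_iter_central (σ : R ≃+* R) (q : F) (j : ℕ) (r : R) :
    (⇑σ)^[j] (algebraMap F R q) * r = r * (⇑σ)^[j] (algebraMap F R q) := by
  induction j generalizing r with
  | zero => simpa using Algebra.commutes q r
  | succ j ih =>
    rw [Function.iterate_succ_apply']
    conv_lhs => rw [show r = σ (σ.symm r) by simp]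
    rw [← map_mul, ih, map_mul]
    simp

private lemma claimA (σ : R ≃+* R) (δ : R →+ R)
    (hδ : ∀ a b : R, δ (a * b) = δ a * b + σ a * δ b)
    (I : TwoSidedIdeal R) (hσI : ∀ a ∈ I, σ a ∈ I)
    (k : ℕ) (z : R) (hz : ∀ r, z * r = r * z) {a : R} (ha : a ∈ I) :
    σ z * (⇑σ)^[k] (δ a) - z * (⇑σ)^[k] (δ a) ∈ I := by
  induction k generalizing z with
  | zero =>
    have h1 : δ (z * a) = δ z * a + σ z * δ a := hδ z a
    have h2 : δ (a * z) = δ a * z + σ a * δ z := hδ a z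
    have hza : z * a = a * z := hz a
    have this1 : δ a * z + σ a * δ z = δ z * a + σ z * δ a := by
      rw [← h2, ← hza, h1]
    have key : σ z * δ a - z * δ a = σ a * δ z - δ z * a := by
      rw [hz (δ a)]
      have h4 : σ z * δ a = δ z * a + σ z * δ a - δ z * a := by abel
      rw [h4, ← this1]; abel
    rw [Function.iterate_zero_apply, key]
    exact sub_mem (I.mul_mem_right _ _ (hσI _ ha)) (I.mul_mem_left _ _ ha)
  | succ k ih =>
    have hz' : ∀ r, σ.symm z * r = r * σ.symm z := by
      intro r
      have := hz (σ r)
      calc σ.symm z * r = σ.symm (z * σ r) := by simp [map_mul]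
        _ = σ.symm (σ r * z) := by rw [this]
        _ = r * σ.symm z := by simp [map_mul]
    have hmem := ih (σ.symm z) hz'
    have h5 : σ z * (⇑σ)^[k + 1] (δ a) - z * (⇑σ)^[k + 1] (δ a)
        = σ (σ (σ.symm z) * (⇑σ)^[k] (δ a) - σ.symm z * (⇑σ)^[k] (δ a)) := by
      rw [map_sub, map_mul, map_mul, Function.iterate_succ_apply']
      simp
    rw [h5]
    exact hσI _ hmem

private lemma lemKL (σ : R ≃+* R) (δ : R →+ R)
    (hδ : ∀ a b : R, δ (a * b) = δ a * b + σ a * δ b)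
    (I : TwoSidedIdeal R) (hσI : ∀ a ∈ I, σ a ∈ I) (q : F)
    (j k : ℕ) {a : R} (ha : a ∈ I) :
    (⇑σ)^[j] (algebraMap F R q) * (⇑σ)^[k] (δ a) - q • (⇑σ)^[k] (δ a) ∈ I := by
  induction j with
  | zero => simp [Algebra.smul_def]
  | succ j ih =>
    have hA := claimA σ δ hδ I hσI k ((⇑σ)^[j] (algebraMap F R q))
      (sig_iter_central σ q j) ha
    have heq : (⇑σ)^[j + 1] (algebraMap F R q) * (⇑σ)^[k] (δ a) - q • (⇑σ)^[k] (δ a)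
        = (σ ((⇑σ)^[j] (algebraMap F R q)) * (⇑σ)^[k] (δ a)
            - (⇑σ)^[j] (algebraMap F R q) * (⇑σ)^[k] (δ a))
          + ((⇑σ)^[j] (algebraMap F R q) * (⇑σ)^[k] (δ a) - q • (⇑σ)^[k] (δ a)) := by
      rw [Function.iterate_succ_apply']; abel
    rw [heq]
    exact add_mem hA ih

private lemma lemM (σ : R ≃+* R) (δ : R →+ R)
    (hδ : ∀ a b : R, δ (a * b) = δ a * b + σ a * δ b)
    (I : TwoSidedIdeal R) (hσI : ∀ a ∈ I, σ a ∈ I) (q : F)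
    (hqskew : ∀ r : R, δ (σ r) = q • σ (δ r))
    (i : ℕ) (k : ℕ) {a : R} (ha : a ∈ I) :
    (⇑σ)^[k] (δ ((⇑σ)^[i] a)) - q ^ i • (⇑σ)^[k + i] (δ a) ∈ I := by
  induction i generalizing k with
  | zero => simp
  | succ i ih =>
    set c : R := (⇑σ)^[k] (algebraMap F R q) with hc
    set T : R := (⇑σ)^[k + 1 + i] (δ a) with hT
    set W : R := (⇑σ)^[k + 1] (δ ((⇑σ)^[i] a)) with hW
    have h1 : (⇑σ)^[k] (δ ((⇑σ)^[i + 1] a)) = c * W := by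
      rw [Function.iterate_succ_apply' σ i a, hqskew, Algebra.smul_def,
        sig_iter_mul σ k, hW, hc, Function.iterate_succ_apply σ k]
    have hIH : W - q ^ i • T ∈ I := ih (k + 1)
    have hKL : c * T - q • T ∈ I := lemKL σ δ hδ I hσI q k (k + 1 + i) ha
    have hidx : k + (i + 1) = k + 1 + i := by omega
    have h2 : (⇑σ)^[k] (δ ((⇑σ)^[i + 1] a)) - q ^ (i + 1) • (⇑σ)^[k + (i + 1)] (δ a)
        = c * (W - q ^ i • T) + q ^ i • (c * T - q • T) := by
      rw [h1, hidx, ← hT, mul_sub, mul_smul_comm, smul_sub, smul_smul, ← pow_succ]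
      abel
    rw [h2]
    exact add_mem (I.mul_mem_left _ _ hIH) (smul_mem' I _ hKL)

end Aux

section Aux2

variable {F : Type*} [Field F] {R : Type*} [Ring R] [Algebra F R]

private def lowTerms (δ : R →+ R) (k : ℕ) (y : R) : AddSubgroup R :=
  AddSubgroup.closure {t | ∃ z : R, ∃ j < k, t = z * (⇑δ)^[j] y}

private lemma lowTerms_delta (σ : R ≃+* R) (δ : R →+ R)
    (hδ : ∀ a b : R, δ (a * b) = δ a * b + σ a * δ b)
    (k : ℕ) (y : R) {w : R} (hw : w ∈ lowTerms δ k y) :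
    δ w ∈ lowTerms δ (k + 1) y := by
  induction hw using AddSubgroup.closure_induction with
  | mem x hx =>
    obtain ⟨z, j, hj, rfl⟩ := hx
    rw [hδ]
    refine add_mem (AddSubgroup.subset_closure ⟨δ z, j, by omega, rfl⟩) ?_
    exact AddSubgroup.subset_closure ⟨σ z, j + 1, by omega, by
      rw [Function.iterate_succ_apply']⟩
  | zero => simp [map_zero]
  | add x y' hx hy' ihx ihy => rw [map_add]; exact add_mem ihx ihy
  | neg x hx ihx => rw [map_neg]; exact neg_mem ihx

private lemma lowTerms_mem_ideal (δ : R →+ R) (I : TwoSidedIdeal R)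
    (k : ℕ) (y : R) (hy : ∀ j < k, (⇑δ)^[j] y ∈ I) {w : R}
    (hw : w ∈ lowTerms δ k y) : w ∈ I := by
  induction hw using AddSubgroup.closure_induction with
  | mem x hx =>
    obtain ⟨z, j, hj, rfl⟩ := hx
    exact I.mul_mem_left _ _ (hy j hj)
  | zero => exact zero_mem I
  | add x y' hx hy' ihx ihy => exact add_mem ihx ihy
  | neg x hx ihx => exact neg_mem ihx

private lemma expLemma (σ : R ≃+* R) (δ : R →+ R)
    (hδ : ∀ a b : R, δ (a * b) = δ a * b + σ a * δ b)
    (k : ℕ) (x y : R) :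
    ∃ w ∈ lowTerms δ k y, (⇑δ)^[k + 1] (x * y) =
      (⇑σ)^[k + 1] x * (⇑δ)^[k + 1] y +
      (∑ i ∈ Finset.range (k + 1), (⇑σ)^[k - i] (δ ((⇑σ)^[i] x))) * (⇑δ)^[k] y + w := by
  induction k with
  | zero =>
    refine ⟨0, zero_mem _, ?_⟩
    simp [hδ x y]
    abel
  | succ k ih =>
    obtain ⟨w, hw, heq⟩ := ih
    refine ⟨δ (∑ i ∈ Finset.range (k + 1), (⇑σ)^[k - i] (δ ((⇑σ)^[i] x))) * (⇑δ)^[k] y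
      + δ w, add_mem (AddSubgroup.subset_closure ⟨_, k, by omega, rfl⟩)
        (lowTerms_delta σ δ hδ k y hw), ?_⟩
    have hS : (∑ i ∈ Finset.range (k + 1 + 1), (⇑σ)^[k + 1 - i] (δ ((⇑σ)^[i] x)))
        = δ ((⇑σ)^[k + 1] x)
          + σ (∑ i ∈ Finset.range (k + 1), (⇑σ)^[k - i] (δ ((⇑σ)^[i] x))) := by
      rw [Finset.sum_range_succ, map_sum]
      rw [Nat.sub_self, Function.iterate_zero_apply, add_comm]
      congr 1
      refine Finset.sum_congr rfl fun i hi => ?_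
      have hik : i ≤ k := by simpa [Nat.lt_succ_iff] using hi
      rw [← Function.iterate_succ_apply' σ (k - i)]
      congr 1
      omega
    calc (⇑δ)^[k + 1 + 1] (x * y) = δ ((⇑δ)^[k + 1] (x * y)) := by
            rw [Function.iterate_succ_apply']
      _ = δ ((⇑σ)^[k + 1] x * (⇑δ)^[k + 1] y) +
          δ ((∑ i ∈ Finset.range (k + 1), (⇑σ)^[k - i] (δ ((⇑σ)^[i] x))) * (⇑δ)^[k] y) +
          δ w := by rw [heq, map_add, map_add]
      _ = (δ ((⇑σ)^[k + 1] x) * (⇑δ)^[k + 1] y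
            + σ ((⇑σ)^[k + 1] x) * δ ((⇑δ)^[k + 1] y))
          + (δ (∑ i ∈ Finset.range (k + 1), (⇑σ)^[k - i] (δ ((⇑σ)^[i] x))) * (⇑δ)^[k] y
            + σ (∑ i ∈ Finset.range (k + 1), (⇑σ)^[k - i] (δ ((⇑σ)^[i] x)))
              * δ ((⇑δ)^[k] y))
          + δ w := by rw [hδ, hδ]
      _ = _ := by
            rw [hS, ← Function.iterate_succ_apply' σ (k + 1),
              ← Function.iterate_succ_apply' δ (k + 1), ← Function.iterate_succ_apply' δ k,
              add_mul]
            abel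

private lemma lemB (σ : R ≃+* R) (δ : R →+ R)
    (hδ : ∀ a b : R, δ (a * b) = δ a * b + σ a * δ b)
    (I : TwoSidedIdeal R) (hσI : ∀ a ∈ I, σ a ∈ I) :
    ∀ (m : ℕ) (b : Fin m → R), (∀ i, b i ∈ I) → ∀ j < m,
      (⇑δ)^[j] ((List.ofFn b).prod) ∈ I := by
  intro m
  induction m with
  | zero => intro b hb j hj; omega
  | succ m ih =>
    intro b hb j hj
    have hprod : (List.ofFn b).prod
        = b 0 * (List.ofFn fun i : Fin m => b i.succ).prod := by
      rw [List.ofFn_succ, List.prod_cons]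
    rw [hprod]
    match j with
    | 0 =>
      simpa using I.mul_mem_right _ _ (hb 0)
    | (k + 1) =>
      obtain ⟨w, hw, heq⟩ := expLemma σ δ hδ k (b 0) ((List.ofFn fun i : Fin m => b i.succ).prod)
      rw [heq]
      have hk : k < m := by omega
      refine add_mem (add_mem ?_ ?_) ?_
      · exact I.mul_mem_right _ _
          (sig_iter_mem σ I hσI (k + 1) (hb 0))
      · exact I.mul_mem_left _ _ (ih _ (fun i => hb i.succ) k hk)
      · exact lowTerms_mem_ideal δ I k _
          (fun j' hj' => ih _ (fun i => hb i.succ) j' (by omega)) hw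

end Aux2

/-- The `q`-factorial `(n!)_q = ∏_{i=1}^{n} (1 + q + ⋯ + q^{i-1})`. -/
def qFactorial {F : Type*} [Field F] (q : F) (n : ℕ) : F :=
  ∏ i ∈ Finset.range n, ∑ k ∈ Finset.range (i + 1), q ^ k

/-- the `q`-Leibniz formula for a `q`-skew `σ`-derivation on a `σ`-stable
ideal `I`: for `a₁, …, aₙ ∈ I`,
`δⁿ(a₁⋯aₙ) = (n!)_q · σ^{n-1}δ(a₁) σ^{n-2}δ(a₂) ⋯ δ(aₙ) + w` with `w ∈ I`. -/
theorem stmt16 {F : Type*} [Field F] {R : Type*} [Ring R] [Algebra F R]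
    (σ : R ≃+* R) (δ : R →+ R) (hδ : IsSkewDerivation (σ : R →+* R) δ)
    (q : F) (hq : q ≠ 0) (hqskew : ∀ r : R, δ (σ r) = q • σ (δ r))
    (I : TwoSidedIdeal R) (hσI : ∀ a ∈ I, σ a ∈ I)
    (n : ℕ) (a : Fin n → R) (ha : ∀ i, a i ∈ I) :
    ∃ w ∈ I, (⇑δ)^[n] ((List.ofFn a).prod) =
      qFactorial q n •
        (List.ofFn fun i : Fin n => (⇑σ)^[n - 1 - (i : ℕ)] (δ (a i))).prod + w := by
  have hδ' : ∀ a b : R, δ (a * b) = δ a * b + σ a * δ b := hδ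
  induction n with
  | zero =>
    refine ⟨0, zero_mem I, ?_⟩
    simp [qFactorial]
  | succ n ih =>
    set x : R := a 0 with hx
    set atail : Fin n → R := fun i => a i.succ with hatail
    set y : R := (List.ofFn atail).prod with hy
    obtain ⟨w₁, hw₁, hD⟩ := ih atail (fun i => ha i.succ)
    set c : F := qFactorial q n with hc
    set P' : R := (List.ofFn fun i : Fin n => (⇑σ)^[n - 1 - (i : ℕ)] (δ (atail i))).prod
      with hP'
    obtain ⟨w₀, hw₀, heq⟩ := expLemma σ δ hδ' n x y
    have hw₀I : w₀ ∈ I :=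
      lowTerms_mem_ideal δ I n y
        (fun j hj => lemB σ δ hδ' I hσI n atail (fun i => ha i.succ) j hj) hw₀
    set b : F := ∑ i ∈ Finset.range (n + 1), q ^ i with hb
    set t₀ : R := (⇑σ)^[n] (δ x) with ht₀
    set S : R := ∑ i ∈ Finset.range (n + 1), (⇑σ)^[n - i] (δ ((⇑σ)^[i] x)) with hS
    set D : R := (⇑δ)^[n] y with hDd
    set W : R := S - b • t₀ with hW
    have hWmem : W ∈ I := by
      have : W = ∑ i ∈ Finset.range (n + 1),
          ((⇑σ)^[n - i] (δ ((⇑σ)^[i] x)) - q ^ i • t₀) := by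
        rw [Finset.sum_sub_distrib, hW, hS, hb, Finset.sum_smul]
      rw [this]
      refine sum_mem fun i hi => ?_
      have hin : i ≤ n := by simpa [Nat.lt_succ_iff] using hi
      have := lemM σ δ hδ' I hσI q hqskew i (n - i) (ha 0)
      rwa [Nat.sub_add_cancel hin] at this
    have hSdec : S = b • t₀ + W := by rw [hW]; abel
    have hProdSplit : (List.ofFn a).prod = x * y := by
      rw [List.ofFn_succ, List.prod_cons]
    have hPsplit : (List.ofFn fun i : Fin (n + 1) =>
        (⇑σ)^[n + 1 - 1 - (i : ℕ)] (δ (a i))).prod = t₀ * P' := by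
      rw [List.ofFn_succ, List.prod_cons]
      congr 1
      rw [hP', hatail]
      refine congrArg List.prod (congrArg List.ofFn (funext fun i => ?_))
      have he : n + 1 - 1 - ((i.succ : Fin (n + 1)) : ℕ) = n - 1 - (i : ℕ) := by
        simp only [Fin.val_succ]
        omega
      rw [he]
    have hQ : qFactorial q (n + 1) • (t₀ * P') = (b • t₀) * (c • P') := by
      rw [smul_mul_assoc, mul_smul_comm, smul_smul]
      congr 1
      rw [qFactorial, Finset.prod_range_succ, mul_comm]
      rfl
    have hSD : S * D = (b • t₀) * (c • P') + ((b • t₀) * w₁ + W * D) := by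
      calc S * D = (b • t₀) * D + W * D := by rw [hSdec, add_mul]
        _ = (b • t₀) * (c • P' + w₁) + W * D := by rw [← hD]
        _ = _ := by rw [mul_add]; abel
    refine ⟨(⇑σ)^[n + 1] x * (⇑δ)^[n + 1] y + ((b • t₀) * w₁ + W * D) + w₀, ?_, ?_⟩
    · refine add_mem (add_mem ?_ (add_mem ?_ ?_)) hw₀I
      · exact I.mul_mem_right _ _ (sig_iter_mem σ I hσI (n + 1) (ha 0))
      · exact I.mul_mem_left _ _ hw₁
      · exact I.mul_mem_right _ _ hWmem
    · rw [hProdSplit, hPsplit, heq, hSD, hQ]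
      abel
end

section
/- Let R be an F-algebra, δ a q-skew σ-derivation (δσ = qσδ, q ∈ F nonzero, σ an automorphism), and I a σ-stable ideal with Iⁿ = 0. If (n!)_q ≠ 0 in F, then δ(a) is nilpotent for every a ∈ I; specifically (δ(a))^{n²} = 0. -/
open Function

private def s17Z {R : Type*} [Ring R] (σ : R ≃+* R) (v : R) : ℕ → R
  | 0 => 1
  | s+1 => v * σ (s17Z σ v s)

private def s17E {F : Type*} [Field F] (q : F) : ℕ → ℕ → F
  | 0, _ => 1
  | m+1, c => (q ^ c * ∑ k ∈ Finset.range (m+1), q ^ k) * s17E q m (c+1)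

private lemma s17_iter_mul {R : Type*} [Ring R] (σ : R ≃+* R) (t : ℕ) (x y : R) :
    (⇑σ)^[t] (x * y) = (⇑σ)^[t] x * (⇑σ)^[t] y := by
  induction t with
  | zero => rfl
  | succ t ih => simp [Function.iterate_succ_apply', ih]

private lemma s17_iter_one {R : Type*} [Ring R] (σ : R ≃+* R) (t : ℕ) :
    (⇑σ)^[t] (1 : R) = 1 := by
  induction t with
  | zero => rfl
  | succ t ih => simp [Function.iterate_succ_apply', ih]

private lemma s17_iter_zero {R : Type*} [Ring R] (σ : R ≃+* R) (t : ℕ) :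
    (⇑σ)^[t] (0 : R) = 0 := by
  induction t with
  | zero => rfl
  | succ t ih => simp [Function.iterate_succ_apply', ih]

private lemma s17_iter_sub {R : Type*} [Ring R] (σ : R ≃+* R) (t : ℕ) (x y : R) :
    (⇑σ)^[t] (x - y) = (⇑σ)^[t] x - (⇑σ)^[t] y := by
  induction t with
  | zero => rfl
  | succ t ih => simp [Function.iterate_succ_apply', ih]

private lemma s17_iter_pow {R : Type*} [Ring R] (σ : R ≃+* R) (t m : ℕ) (x : R) :
    (⇑σ)^[t] (x ^ m) = ((⇑σ)^[t] x) ^ m := by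
  induction m with
  | zero => simp [s17_iter_one]
  | succ m ih => rw [pow_succ, pow_succ, s17_iter_mul, ih]

private lemma s17_cent_apply {R : Type*} [Ring R] (σ : R ≃+* R) {w : R}
    (h : ∀ r : R, w * r = r * w) (r : R) : σ w * r = r * σ w := by
  conv_lhs => rw [← σ.apply_symm_apply r]
  conv_rhs => rw [← σ.apply_symm_apply r]
  rw [← map_mul, ← map_mul, h]

private def s17J {R : Type*} [Ring R] (δ : R →+ R) (y : R) (k : ℕ) : AddSubgroup R :=
  AddSubgroup.closure {r | ∃ c : R, ∃ j : ℕ, j < k ∧ r = c * (⇑δ)^[j] y}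

private lemma s17J_gen {R : Type*} [Ring R] (δ : R →+ R) (y : R) (k : ℕ) (c : R) {j : ℕ}
    (hj : j < k) : c * (⇑δ)^[j] y ∈ s17J δ y k :=
  AddSubgroup.subset_closure ⟨c, j, hj, rfl⟩

private lemma s17J_delta {R : Type*} [Ring R] (σ : R ≃+* R) (δ : R →+ R)
    (hδ : IsSkewDerivation (σ : R →+* R) δ) (y : R) (k : ℕ) {r : R}
    (hr : r ∈ s17J δ y k) : δ r ∈ s17J δ y (k+1) := by
  induction hr using AddSubgroup.closure_induction with
  | mem r hr =>
    obtain ⟨c, j, hj, rfl⟩ := hr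
    rw [hδ c ((⇑δ)^[j] y)]
    exact (s17J δ y (k+1)).add_mem (s17J_gen δ y (k+1) (δ c) (by omega))
      (by rw [← Function.iterate_succ_apply' (⇑δ) j y]
          exact s17J_gen δ y (k+1) (σ c) (by omega))
  | zero => simpa using (s17J δ y (k+1)).zero_mem
  | add r s _ _ hr hs => rw [map_add]; exact (s17J δ y (k+1)).add_mem hr hs
  | neg r _ hr => rw [map_neg]; exact (s17J δ y (k+1)).neg_mem hr

private lemma s17J_in_I {R : Type*} [Ring R] (δ : R →+ R) (I : TwoSidedIdeal R) (y : R) (k : ℕ)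
    (h : ∀ j, j < k → (⇑δ)^[j] y ∈ I) {r : R} (hr : r ∈ s17J δ y k) : r ∈ I := by
  induction hr using AddSubgroup.closure_induction with
  | mem r hr => obtain ⟨c, j, hj, rfl⟩ := hr; exact I.mul_mem_left c _ (h j hj)
  | zero => exact I.zero_mem
  | add r s _ _ hr hs => exact I.add_mem hr hs
  | neg r _ hr => exact I.neg_mem hr

private lemma s17RPL {R : Type*} [Ring R] (σ : R ≃+* R) (δ : R →+ R)
    (hδ : IsSkewDerivation (σ : R →+* R) δ) (k : ℕ) (x y : R) :
    (⇑δ)^[k+1] (x * y) - (⇑σ)^[k+1] x * (⇑δ)^[k+1] y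
      - (∑ s ∈ Finset.range (k+1), (⇑σ)^[k-s] (δ ((⇑σ)^[s] x))) * (⇑δ)^[k] y
      ∈ s17J δ y k := by
  have hδ' : ∀ a b : R, δ (a * b) = δ a * b + σ a * δ b := hδ
  induction k with
  | zero =>
    have : (⇑δ)^[0+1] (x * y) - (⇑σ)^[0+1] x * (⇑δ)^[0+1] y
      - (∑ s ∈ Finset.range (0+1), (⇑σ)^[0-s] (δ ((⇑σ)^[s] x))) * (⇑δ)^[0] y = 0 := by
      simp only [zero_add, Finset.sum_range_one, Function.iterate_one, Function.iterate_zero,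
        id_eq, Nat.sub_zero]
      rw [hδ' x y]; abel
    rw [this]; exact (s17J δ y 0).zero_mem
  | succ k ih =>
    set Sm : R := ∑ s ∈ Finset.range (k+1), (⇑σ)^[k-s] (δ ((⇑σ)^[s] x)) with hSm
    set w : R := (⇑δ)^[k+1] (x * y) - (⇑σ)^[k+1] x * (⇑δ)^[k+1] y - Sm * (⇑δ)^[k] y with hw
    have hwJ : w ∈ s17J δ y k := ih
    have hX : (⇑δ)^[k+1] (x * y) = (⇑σ)^[k+1] x * (⇑δ)^[k+1] y + Sm * (⇑δ)^[k] y + w := by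
      rw [hw]; abel
    have hsplit : ∑ s ∈ Finset.range (k+1+1), (⇑σ)^[k+1-s] (δ ((⇑σ)^[s] x))
        = σ Sm + δ ((⇑σ)^[k+1] x) := by
      rw [Finset.sum_range_succ]
      congr 1
      · rw [hSm, map_sum]
        refine Finset.sum_congr rfl fun s hs => ?_
        have hs' : s ≤ k := by simpa [Nat.lt_succ_iff] using hs
        have : k + 1 - s = (k - s) + 1 := by omega
        rw [this, Function.iterate_succ_apply']
      · simp
    rw [Function.iterate_succ_apply' (⇑δ) (k+1) (x*y), hX, map_add, map_add,
      hδ' ((⇑σ)^[k+1] x) ((⇑δ)^[k+1] y), hδ' Sm ((⇑δ)^[k] y), hsplit,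
      Function.iterate_succ_apply' (⇑σ) (k+1) x,
      Function.iterate_succ_apply' (⇑δ) (k+1) y,
      Function.iterate_succ_apply' (⇑δ) k y, add_mul]
    have mem1 : δ Sm * (⇑δ)^[k] y ∈ s17J δ y (k+1) := s17J_gen δ y (k+1) (δ Sm) (by omega)
    have mem2 : δ w ∈ s17J δ y (k+1) := s17J_delta σ δ hδ y k hwJ
    convert (s17J δ y (k+1)).add_mem mem1 mem2 using 1
    abel

private lemma s17LOW {R : Type*} [Ring R] (σ : R ≃+* R) (δ : R →+ R)
    (hδ : IsSkewDerivation (σ : R →+* R) δ) (I : TwoSidedIdeal R)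
    (hσI' : ∀ (t : ℕ) (r : R), r ∈ I → (⇑σ)^[t] r ∈ I) :
    ∀ (L : List R), (∀ r ∈ L, r ∈ I) → ∀ k, k < L.length → (⇑δ)^[k] L.prod ∈ I := by
  intro L
  induction L with
  | nil => intro _ k hk; simp at hk
  | cons b L ih =>
    intro hmem k hk
    have hb : b ∈ I := hmem b List.mem_cons_self
    have hmem' : ∀ r ∈ L, r ∈ I := fun r hr => hmem r (List.mem_cons_of_mem b hr)
    cases k with
    | zero =>
      simpa [List.prod_cons] using I.mul_mem_right b L.prod hb
    | succ k =>
      have hk' : k < L.length := by simpa [Nat.succ_lt_succ_iff] using hk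
      have hr := s17RPL σ δ hδ k b L.prod
      set Sm : R := ∑ s ∈ Finset.range (k+1), (⇑σ)^[k-s] (δ ((⇑σ)^[s] b)) with hSm
      set w : R := (⇑δ)^[k+1] (b * L.prod) - (⇑σ)^[k+1] b * (⇑δ)^[k+1] L.prod
        - Sm * (⇑δ)^[k] L.prod with hw
      have hX : (⇑δ)^[k+1] (b * L.prod)
          = (⇑σ)^[k+1] b * (⇑δ)^[k+1] L.prod + Sm * (⇑δ)^[k] L.prod + w := by rw [hw]; abel
      have m1 : (⇑σ)^[k+1] b * (⇑δ)^[k+1] L.prod ∈ I :=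
        I.mul_mem_right _ _ (hσI' (k+1) b hb)
      have m2 : Sm * (⇑δ)^[k] L.prod ∈ I := I.mul_mem_left _ _ (ih hmem' k hk')
      have m3 : w ∈ I := s17J_in_I δ I L.prod k (fun j hj => ih hmem' j (hj.trans hk')) hr
      rw [List.prod_cons, hX]
      exact I.add_mem (I.add_mem m1 m2) m3

/-- if `δ` is a `q`-skew `σ`-derivation, `I` a `σ`-stable ideal with
`Iⁿ = 0`, and `(n!)_q ≠ 0` in `F`, then `δ(a)` is nilpotent for every `a ∈ I`;
specifically `(δ(a))^{n²} = 0`. -/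
theorem stmt17 {F : Type*} [Field F] {R : Type*} [Ring R] [Algebra F R]
    (σ : R ≃+* R) (δ : R →+ R) (hδ : IsSkewDerivation (σ : R →+* R) δ)
    (q : F) (hq : q ≠ 0) (hqskew : ∀ r : R, δ (σ r) = q • σ (δ r))
    (I : TwoSidedIdeal R) (hσI : ∀ a ∈ I, σ a ∈ I)
    (n : ℕ) (hn : 0 < n)
    (hInil : ∀ a : Fin n → R, (∀ i, a i ∈ I) → (List.ofFn a).prod = 0)
    (hqfac : qFactorial q n ≠ 0) :
    ∀ a ∈ I, δ a ^ (n ^ 2) = 0 := by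
  intro a ha
  have hδ' : ∀ r s : R, δ (r * s) = δ r * s + σ r * δ s := hδ
  set x := δ a with hxdef
  set u : R := algebraMap F R q with hu
  have hσI' : ∀ (t : ℕ) (r : R), r ∈ I → (⇑σ)^[t] r ∈ I := by
    intro t
    induction t with
    | zero => intro r hr; simpa using hr
    | succ t ih => intro r hr; rw [Function.iterate_succ_apply']; exact hσI _ (ih r hr)
  have hu_cent : ∀ r : R, u * r = r * u := fun r => Algebra.commutes q r
  set Z : ℕ → R := s17Z σ u with hZ
  set Zi : ℕ → R := s17Z σ (algebraMap F R q⁻¹) with hZi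
  have hZ0 : Z 0 = 1 := rfl
  have hZsucc : ∀ s, Z (s+1) = u * σ (Z s) := fun s => rfl
  have hZi0 : Zi 0 = 1 := rfl
  have hZisucc : ∀ s, Zi (s+1) = algebraMap F R q⁻¹ * σ (Zi s) := fun s => rfl
  have skew_iter : ∀ (s : ℕ) (r : R), δ ((⇑σ)^[s] r) = Z s * (⇑σ)^[s] (δ r) := by
    intro s
    induction s with
    | zero => intro r; simp [hZ0]
    | succ s ih =>
      intro r
      rw [Function.iterate_succ_apply' (⇑σ) s r, hqskew, ih, Algebra.smul_def, map_mul,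
        ← Function.iterate_succ_apply' (⇑σ) s (δ r), hZsucc, mul_assoc]
  have hZicent : ∀ (s : ℕ) (r : R), Zi s * r = r * Zi s := by
    intro s
    induction s with
    | zero => intro r; rw [hZi0, one_mul, mul_one]
    | succ s ih =>
      intro r
      rw [hZisucc, mul_assoc, s17_cent_apply σ ih r, ← mul_assoc,
        Algebra.commutes (q⁻¹) r, mul_assoc]
  have hZZi : ∀ s, Zi s * Z s = 1 := by
    intro s
    induction s with
    | zero => rw [hZ0, hZi0, one_mul]
    | succ s ih =>
      rw [hZsucc, hZisucc, mul_assoc, ← mul_assoc (σ (Zi s)), ← hu_cent (σ (Zi s)),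
        mul_assoc u, ← map_mul, ih, map_one, mul_one, hu, ← map_mul,
        inv_mul_cancel₀ hq, map_one]
  have hK : ∀ r ∈ I, (σ u - u) * δ r ∈ I := by
    intro r hr
    have e3 : u * r = r * u := Algebra.commutes q r
    have e4 : δ u * r + σ u * δ r = δ r * u + σ r * δ u := by
      rw [← hδ' u r, ← hδ' r u, e3]
    rw [← Algebra.commutes q (δ r)] at e4
    have e5 : (σ u - u) * δ r = σ r * δ u - δ u * r := by
      rw [sub_mul, sub_eq_sub_iff_add_eq_add, add_comm (σ u * δ r), add_comm (σ r * δ u)]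
      exact e4
    rw [e5]
    exact I.sub_mem (I.mul_mem_right _ _ (hσI r hr)) (I.mul_mem_left _ _ hr)
  have hB0 : ∀ j : ℕ, (σ u - u) * (⇑σ)^[j] x ∈ I := by
    intro j
    have h1 : (σ u - u) * δ ((⇑σ)^[j] a) ∈ I := hK _ (hσI' j a ha)
    rw [skew_iter j a] at h1
    have h2 : Zi j * ((σ u - u) * (Z j * (⇑σ)^[j] x)) ∈ I := I.mul_mem_left _ _ h1
    have h3 : Zi j * ((σ u - u) * (Z j * (⇑σ)^[j] x)) = (σ u - u) * (⇑σ)^[j] x := by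
      rw [← mul_assoc, hZicent j (σ u - u), mul_assoc, ← mul_assoc (Zi j), hZZi, one_mul]
    rwa [h3] at h2
  have hS1 : ∀ t j : ℕ, ((⇑σ)^[t+1] u - (⇑σ)^[t] u) * (⇑σ)^[t+j] x ∈ I := by
    intro t j
    have h1 := hσI' t _ (hB0 j)
    rw [s17_iter_mul, s17_iter_sub] at h1
    have e1 : (⇑σ)^[t] (σ u) = (⇑σ)^[t+1] u := (Function.iterate_succ_apply (⇑σ) t u).symm
    have e2 : (⇑σ)^[t] ((⇑σ)^[j] x) = (⇑σ)^[t+j] x := (Function.iterate_add_apply (⇑σ) t j x).symm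
    rwa [e1, e2] at h1
  have hREL : ∀ p M : ℕ, p ≤ M → ((⇑σ)^[p] u - u) * (⇑σ)^[M] x ∈ I := by
    intro p
    induction p with
    | zero => intro M _; simpa using I.zero_mem
    | succ p ih =>
      intro M hpM
      have h1 := hS1 p (M - p)
      rw [show p + (M - p) = M from by omega] at h1
      have h2 := ih M (by omega)
      have e : ((⇑σ)^[p+1] u - (⇑σ)^[p] u) * (⇑σ)^[M] x + ((⇑σ)^[p] u - u) * (⇑σ)^[M] x
          = ((⇑σ)^[p+1] u - u) * (⇑σ)^[M] x := by rw [← add_mul, sub_add_sub_cancel]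
      rw [← e]
      exact I.add_mem h1 h2
  have hupow : ∀ j : ℕ, (u : R) ^ j = algebraMap F R (q ^ j) := fun j => by rw [hu, map_pow]
  have hupcent : ∀ (j : ℕ) (r : R), u ^ j * r = r * u ^ j := fun j r => by
    rw [hupow]; exact Algebra.commutes _ r
  have hSUBB : ∀ (j p M : ℕ), p + j ≤ M + 1 → ((⇑σ)^[p] (Z j) - u ^ j) * (⇑σ)^[M] x ∈ I := by
    intro j
    induction j with
    | zero =>
      intro p M _
      have : (⇑σ)^[p] (Z 0) - u ^ 0 = 0 := by rw [hZ0, s17_iter_one, pow_zero, sub_self]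
      rw [this, zero_mul]; exact I.zero_mem
    | succ j ih =>
      intro p M h
      have e1 : (⇑σ)^[p] (Z (j+1)) = (⇑σ)^[p] u * (⇑σ)^[p+1] (Z j) := by
        rw [hZsucc, s17_iter_mul, ← Function.iterate_succ_apply (⇑σ) p (Z j)]
      have split : ((⇑σ)^[p] (Z (j+1)) - u ^ (j+1)) * (⇑σ)^[M] x
          = (⇑σ)^[p] u * (((⇑σ)^[p+1] (Z j) - u ^ j) * (⇑σ)^[M] x)
            + ((⇑σ)^[p] u - u) * (u ^ j * (⇑σ)^[M] x) := by
        rw [e1]; noncomm_ring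
        rw [show u ^ j * (u * (⇑σ)^[M] x) = u * (u ^ j * (⇑σ)^[M] x) from by
          rw [← mul_assoc, hupcent j u, mul_assoc]]
      rw [split]
      refine I.add_mem (I.mul_mem_left _ _ (ih (p+1) M (by omega))) ?_
      rw [hupcent j ((⇑σ)^[M] x), ← mul_assoc]
      exact I.mul_mem_right _ _ (hREL p M (by omega))
  have hTOP : ∀ (m c : ℕ), (⇑δ)^[m] ((List.ofFn (fun i : Fin m => (⇑σ)^[(i : ℕ) + c] a)).prod)
      - algebraMap F R (s17E q m c) * ((⇑σ)^[m - 1 + c] x) ^ m ∈ I := by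
    intro m
    induction m with
    | zero =>
      intro c
      have : (⇑δ)^[0] ((List.ofFn (fun i : Fin 0 => (⇑σ)^[(i : ℕ) + c] a)).prod)
          - algebraMap F R (s17E q 0 c) * ((⇑σ)^[0 - 1 + c] x) ^ 0 = 0 := by
        simp [s17E]
      rw [this]; exact I.zero_mem
    | succ m ih =>
      intro c
      have hlist : (List.ofFn (fun i : Fin (m+1) => (⇑σ)^[(i : ℕ) + c] a))
          = (⇑σ)^[c] a :: List.ofFn (fun i : Fin m => (⇑σ)^[(i : ℕ) + (c+1)] a) := by
        rw [List.ofFn_succ]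
        congr 1
        · simp
        · congr 1
          funext i
          congr 1
          simp [Fin.val_succ]
          omega
      set v : R := (List.ofFn (fun i : Fin m => (⇑σ)^[(i : ℕ) + (c+1)] a)).prod with hv
      have hvmem : ∀ r ∈ List.ofFn (fun i : Fin m => (⇑σ)^[(i : ℕ) + (c+1)] a), r ∈ I := by
        intro r hr
        rw [List.mem_ofFn] at hr
        obtain ⟨i, rfl⟩ := hr
        exact hσI' _ a ha
      have hlow : ∀ j, j < m → (⇑δ)^[j] v ∈ I := fun j hj =>
        s17LOW σ δ hδ I hσI' _ hvmem j (by rw [List.length_ofFn]; exact hj)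
      have hrpl := s17RPL σ δ hδ m ((⇑σ)^[c] a) v
      set Sm : R := ∑ s ∈ Finset.range (m+1), (⇑σ)^[m-s] (δ ((⇑σ)^[s] ((⇑σ)^[c] a))) with hSm
      set w : R := (⇑δ)^[m+1] ((⇑σ)^[c] a * v) - (⇑σ)^[m+1] ((⇑σ)^[c] a) * (⇑δ)^[m+1] v
        - Sm * (⇑δ)^[m] v with hw
      have hwI : w ∈ I := s17J_in_I δ I v m hlow hrpl
      have hX : (⇑δ)^[m+1] ((⇑σ)^[c] a * v)
          = (⇑σ)^[m+1] ((⇑σ)^[c] a) * (⇑δ)^[m+1] v + Sm * (⇑δ)^[m] v + w := by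
        rw [hw]; abel
      have hT1 : (⇑σ)^[m+1] ((⇑σ)^[c] a) * (⇑δ)^[m+1] v ∈ I :=
        I.mul_mem_right _ _ (hσI' (m+1) _ (hσI' c a ha))
      have hSm2 : Sm - algebraMap F R (q ^ c * ∑ k ∈ Finset.range (m+1), q ^ k)
          * (⇑σ)^[m+c] x ∈ I := by
        have e0 : algebraMap F R (q ^ c * ∑ k ∈ Finset.range (m+1), q ^ k)
            = ∑ s ∈ Finset.range (m+1), (u : R) ^ (s + c) := by
          rw [Finset.mul_sum, map_sum]
          refine Finset.sum_congr rfl fun s _ => ?_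
          rw [hupow, pow_add, mul_comm (q ^ s) (q ^ c)]
        have e1 : Sm = ∑ s ∈ Finset.range (m+1), (⇑σ)^[m-s] (Z (s+c)) * (⇑σ)^[m+c] x := by
          rw [hSm]
          refine Finset.sum_congr rfl fun s hs => ?_
          have hs' : s ≤ m := by simpa [Nat.lt_succ_iff] using hs
          rw [← Function.iterate_add_apply (⇑σ) s c a, skew_iter (s+c) a, s17_iter_mul]
          congr 1
          rw [← Function.iterate_add_apply (⇑σ) (m-s) (s+c) x]
          congr 1
          omega
        rw [e1, e0, Finset.sum_mul, ← Finset.sum_sub_distrib]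
        refine sum_mem fun s hs => ?_
        have hs' : s ≤ m := by simpa [Nat.lt_succ_iff] using hs
        rw [← sub_mul]
        exact hSUBB (s+c) (m-s) (m+c) (by omega)
      have hIH := ih (c+1)
      have epow : ((⇑σ)^[m - 1 + (c+1)] x) ^ m = ((⇑σ)^[m+c] x) ^ m := by
        cases m with
        | zero => simp
        | succ m' => rw [show m' + 1 - 1 + (c+1) = m' + 1 + c from by omega]
      rw [epow] at hIH
      set P : R := algebraMap F R (q ^ c * ∑ k ∈ Finset.range (m+1), q ^ k)
        * (⇑σ)^[m+c] x with hP
      set Qv : R := algebraMap F R (s17E q m (c+1)) * ((⇑σ)^[m+c] x) ^ m with hQ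
      have hPQ : P * Qv = algebraMap F R (s17E q (m+1) c) * ((⇑σ)^[(m+1) - 1 + c] x) ^ (m+1) := by
        rw [hP, hQ, show (m+1) - 1 + c = m + c from by omega, mul_assoc,
          ← mul_assoc ((⇑σ)^[m+c] x) (algebraMap F R (s17E q m (c+1))) (((⇑σ)^[m+c] x) ^ m),
          ← Algebra.commutes (s17E q m (c+1)) ((⇑σ)^[m+c] x),
          mul_assoc (algebraMap F R (s17E q m (c+1))) ((⇑σ)^[m+c] x) (((⇑σ)^[m+c] x) ^ m),
          ← pow_succ' ((⇑σ)^[m+c] x) m, ← mul_assoc, ← map_mul]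
        rfl
      rw [hlist, List.prod_cons, ← hPQ, hX]
      have final : (⇑σ)^[m+1] ((⇑σ)^[c] a) * (⇑δ)^[m+1] v + Sm * (⇑δ)^[m] v + w - P * Qv
          = ((⇑σ)^[m+1] ((⇑σ)^[c] a) * (⇑δ)^[m+1] v + w)
            + ((Sm - P) * (⇑δ)^[m] v + P * ((⇑δ)^[m] v - Qv)) := by
        rw [sub_mul, mul_sub]; abel
      rw [final]
      exact I.add_mem (I.add_mem hT1 hwI)
        (I.add_mem (I.mul_mem_right _ _ hSm2) (I.mul_mem_left _ _ hIH))
  -- nonvanishing of the scalar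
  have hfac : ∀ i, i < n → (∑ k ∈ Finset.range (i+1), q ^ k) ≠ 0 := by
    intro i hi
    have h := hqfac
    unfold qFactorial at h
    exact Finset.prod_ne_zero_iff.mp h i (Finset.mem_range.mpr hi)
  have hE : ∀ m, ∀ c : ℕ, m ≤ n → s17E q m c ≠ 0 := by
    intro m
    induction m with
    | zero => intro c _; simp [s17E]
    | succ m ih =>
      intro c hm
      exact mul_ne_zero (mul_ne_zero (pow_ne_zero c hq) (hfac m (by omega)))
        (ih (c+1) (by omega))
  -- conclusion
  have h0 : (List.ofFn (fun i : Fin n => (⇑σ)^[(i : ℕ) + 0] a)).prod = 0 :=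
    hInil _ (fun i => hσI' _ a ha)
  have htop := hTOP n 0
  rw [h0, iterate_map_zero δ n, zero_sub] at htop
  have hY : algebraMap F R (s17E q n 0) * ((⇑σ)^[n - 1] x) ^ n ∈ I := by
    have := I.neg_mem htop
    rwa [neg_neg, add_zero] at this
  have hYI : ((⇑σ)^[n-1] x) ^ n ∈ I := by
    have e : ((⇑σ)^[n-1] x) ^ n
        = algebraMap F R (s17E q n 0)⁻¹ * (algebraMap F R (s17E q n 0) * ((⇑σ)^[n-1] x) ^ n) := by
      rw [← mul_assoc, ← map_mul, inv_mul_cancel₀ (hE n 0 le_rfl), map_one, one_mul]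
    rw [e]
    exact I.mul_mem_left _ _ hY
  have hprod : (List.ofFn (fun _ : Fin n => ((⇑σ)^[n-1] x) ^ n)).prod = 0 :=
    hInil _ (fun _ => hYI)
  rw [List.ofFn_const, List.prod_replicate, ← pow_mul, ← s17_iter_pow] at hprod
  have hinj : Function.Injective ((⇑σ)^[n-1]) := σ.injective.iterate (n-1)
  have hzero : x ^ (n * n) = 0 := by
    apply hinj
    rw [hprod, s17_iter_zero]
  rw [show n ^ 2 = n * n from sq n]
  exact hzero
end

section
/- Let R be an algebra over a field of characteristic zero and δ a derivation of R. Then the nil radical N(R) is stable under δ: δ(N(R)) ⊆ N(R). -/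
open Finset

section aux

variable {R : Type*} [Ring R] {δ : R →+ R}
  (hδ : ∀ a b : R, δ (a * b) = δ a * b + a * δ b)

include hδ in
lemma aux_leibniz_iter (n : ℕ) (p q : R) :
    δ^[n] (p * q) =
      ∑ k ∈ range n.succ, (n.choose k • (δ^[n - k] p * δ^[k] q)) := by
  induction n with
  | zero =>
    simp [Finset.range]
  | succ n IH =>
    calc
      δ^[n + 1] (p * q) =
          δ (∑ k ∈ range n.succ,
              n.choose k • (δ^[n - k] p * δ^[k] q)) := by
        rw [Function.iterate_succ_apply', IH]
      _ = (∑ k ∈ range n.succ,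
            n.choose k • (δ^[n - k + 1] p * δ^[k] q)) +
          ∑ k ∈ range n.succ,
            n.choose k • (δ^[n - k] p * δ^[k + 1] q) := by
        rw [map_sum, ← sum_add_distrib]
        refine sum_congr rfl fun k _ => ?_
        rw [map_nsmul, hδ, Function.iterate_succ_apply', Function.iterate_succ_apply',
          smul_add]
      _ = (∑ k ∈ range n.succ,
                n.choose k.succ • (δ^[n - k] p * δ^[k + 1] q)) +
              1 • (δ^[n + 1] p * δ^[0] q) +
            ∑ k ∈ range n.succ, n.choose k • (δ^[n - k] p * δ^[k + 1] q) :=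
        ?_
      _ = ((∑ k ∈ range n.succ, n.choose k • (δ^[n - k] p * δ^[k + 1] q)) +
              ∑ k ∈ range n.succ,
                n.choose k.succ • (δ^[n - k] p * δ^[k + 1] q)) +
            1 • (δ^[n + 1] p * δ^[0] q) := by
        rw [add_comm, add_assoc]
      _ = (∑ i ∈ range n.succ,
              (n + 1).choose (i + 1) • (δ^[n + 1 - (i + 1)] p * δ^[i + 1] q)) +
            1 • (δ^[n + 1] p * δ^[0] q) := by
        simp_rw [Nat.choose_succ_succ, Nat.succ_sub_succ, add_smul, sum_add_distrib]
      _ = ∑ k ∈ range n.succ.succ,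
            n.succ.choose k • (δ^[n.succ - k] p * δ^[k] q) := by
        rw [sum_range_succ' _ n.succ, Nat.choose_zero_right, tsub_zero]
    congr
    refine (sum_range_succ' _ _).trans (congr_arg₂ (· + ·) ?_ ?_)
    · rw [sum_range_succ, Nat.choose_succ_self, zero_smul, add_zero]
      refine sum_congr rfl fun k hk => ?_
      rw [mem_range] at hk
      congr
      omega
    · rw [Nat.choose_zero_right, tsub_zero]

lemma aux_nsmul_mem {R : Type*} [Ring R] (J : TwoSidedIdeal R) (n : ℕ) {x : R}
    (hx : x ∈ J) : n • x ∈ J := by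
  rw [nsmul_eq_mul]; exact J.mul_mem_left _ _ hx

include hδ in
/-- Key combinatorial lemma: if `a ∈ J`, then for `k < m`, `δ^[k] (a ^ m) ∈ J`,
and `δ^[m] (a ^ m) - m! • (δ a) ^ m ∈ J`. -/
lemma aux_key (J : TwoSidedIdeal R) {a : R} (ha : a ∈ J) (m : ℕ) :
    (∀ k < m, δ^[k] (a ^ m) ∈ J) ∧
      δ^[m] (a ^ m) - (m.factorial) • (δ a) ^ m ∈ J := by
  induction m with
  | zero =>
    refine ⟨fun k hk => absurd hk (Nat.not_lt_zero k), ?_⟩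
    simp
  | succ m IH =>
    have key : ∀ k ≤ m + 1, δ^[k] (a ^ (m + 1)) -
        (if k = m + 1 then (k.choose 1 * m.factorial) • (δ a) ^ (m + 1) else 0) ∈ J := by
      intro k hk
      have hpow : a ^ (m + 1) = a * a ^ m := by rw [pow_succ'];
      rw [hpow, aux_leibniz_iter hδ]
      -- split off the j = k term (where exponent of δ on `a` is 0)
      rw [sum_range_succ]
      have hterm_last : (k.choose k) • (δ^[k - k] a * δ^[k] (a ^ m)) ∈ J := by
        simp only [Nat.sub_self, Function.iterate_zero_apply]
        exact aux_nsmul_mem J _ (J.mul_mem_right _ _ ha)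
      rcases Nat.lt_or_ge k (m + 1) with hklt | hkge
      · -- k ≤ m : every other term has δ^[j] (a^m) with j < m, or j = m times (δ a)·…
        have hk' : k ≤ m := by omega
        simp only [if_neg (by omega : ¬ k = m + 1), sub_zero]
        refine J.add_mem ?_ hterm_last
        refine TwoSidedIdeal.finsetSum_mem _ _ _ fun j hj => ?_
        rw [mem_range] at hj
        rcases Nat.lt_or_ge j m with hjm | hjm
        · exact aux_nsmul_mem J _ (J.mul_mem_left _ _ ((IH.1) j hjm))
        · -- j = m, so k - j = k - m; since j < k ≤ m, impossible unless k = m+? ; here j < k ≤ m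
          omega
      · -- k = m + 1
        have hk1 : k = m + 1 := by omega
        subst hk1
        rw [if_pos rfl]
        -- terms j < m : in J by IH; j = m : gives the main term
        rw [sum_range_succ]
        have hmain : ((m+1).choose m) • (δ^[m + 1 - m] a * δ^[m] (a ^ m)) -
            ((m+1).choose 1 * m.factorial) • (δ a) ^ (m + 1) ∈ J := by
          have h1 : m + 1 - m = 1 := by omega
          have h2 : (m+1).choose m = (m+1).choose 1 := by
            have h := Nat.choose_symm (show 1 ≤ m + 1 by omega)
            rwa [Nat.succ_sub_one] at h
          obtain ⟨j₀, hj₀, hrep⟩ : ∃ j₀, j₀ ∈ J ∧ δ^[m] (a ^ m) =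
              m.factorial • (δ a) ^ m + j₀ :=
            ⟨_, IH.2, by abel⟩
          rw [h1, h2, Function.iterate_one, hrep]
          have heq : (m+1).choose 1 • (δ a * (m.factorial • (δ a) ^ m + j₀)) -
              ((m+1).choose 1 * m.factorial) • (δ a) ^ (m + 1) =
              (m+1).choose 1 • (δ a * j₀) := by
            rw [mul_add, smul_add, mul_smul_comm, smul_smul, pow_succ']
            abel
          rw [heq]
          exact aux_nsmul_mem J _ (J.mul_mem_left _ _ hj₀)
        have hrest : ∑ j ∈ range m,
            ((m+1).choose j) • (δ^[m + 1 - j] a * δ^[j] (a ^ m)) ∈ J := by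
          refine TwoSidedIdeal.finsetSum_mem _ _ _ fun j hj => ?_
          rw [mem_range] at hj
          exact aux_nsmul_mem J _ (J.mul_mem_left _ _ ((IH.1) j hj))
        have := J.add_mem (J.add_mem hrest hmain) hterm_last
        convert this using 1
        abel
    refine ⟨fun k hk => ?_, ?_⟩
    · have := key k (by omega)
      simpa [if_neg (by omega : ¬ k = m + 1)] using this
    · have := key (m + 1) le_rfl
      simp only [if_pos rfl] at this
      have hc : (m+1).choose 1 * m.factorial = (m+1).factorial := by
        rw [Nat.choose_one_right, Nat.factorial_succ]
      rwa [hc] at this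

end aux

/-- The nil radical of `R` as a set: the union of all nil two-sided ideals
(this is the largest nil ideal). -/
def nilRadicalSet (R : Type*) [Ring R] : Set R :=
  {a | ∃ J : TwoSidedIdeal R, (∀ b ∈ J, IsNilpotent b) ∧ a ∈ J}

/-- if `R` is an algebra over a field of characteristic zero and `δ` a
derivation of `R`, then the nil radical is `δ`-stable. -/
theorem stmt18 {F : Type*} [Field F] [CharZero F] {R : Type*} [Ring R] [Algebra F R]
    (δ : R →+ R) (hδ : ∀ a b : R, δ (a * b) = δ a * b + a * δ b) :
    ∀ a ∈ nilRadicalSet R, δ a ∈ nilRadicalSet R := by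
  rintro a ⟨J, hJnil, haJ⟩
  -- the ideal K = J + δ(J)
  set K : TwoSidedIdeal R := TwoSidedIdeal.mk'
    {x | ∃ b ∈ J, ∃ c ∈ J, x = b + δ c}
    ⟨0, J.zero_mem, 0, J.zero_mem, by simp⟩
    (by rintro x y ⟨b, hb, c, hc, rfl⟩ ⟨b', hb', c', hc', rfl⟩
        exact ⟨b + b', J.add_mem hb hb', c + c', J.add_mem hc hc', by
          rw [map_add]; abel⟩)
    (by rintro x ⟨b, hb, c, hc, rfl⟩
        exact ⟨-b, J.neg_mem hb, -c, J.neg_mem hc, by rw [map_neg]; abel⟩)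
    (by rintro x y ⟨b, hb, c, hc, rfl⟩
        refine ⟨x * b - δ x * c, ?_, x * c, J.mul_mem_left _ _ hc, ?_⟩
        · exact J.sub_mem (J.mul_mem_left _ _ hb) (J.mul_mem_left _ _ hc)
        · rw [hδ, mul_add]; abel)
    (by rintro x y ⟨b, hb, c, hc, rfl⟩
        refine ⟨b * y - c * δ y, ?_, c * y, J.mul_mem_right _ _ hc, ?_⟩
        · exact J.sub_mem (J.mul_mem_right _ _ hb) (J.mul_mem_right _ _ hc)
        · rw [hδ, add_mul]; abel)
  -- a key fact: for c ∈ J, (δ c) ^ m ∈ J where c ^ m = 0, m ≥ 1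
  have hpowJ : ∀ c ∈ J, ∃ m : ℕ, 0 < m ∧ (δ c) ^ m ∈ J := by
    intro c hc
    obtain ⟨n, hn⟩ := hJnil c hc
    refine ⟨n + 1, Nat.succ_pos n, ?_⟩
    have hc1 : c ^ (n + 1) = 0 := by rw [pow_succ, hn, zero_mul]
    have hkey := (aux_key hδ J hc (n + 1)).2
    rw [hc1] at hkey
    simp only [Function.iterate_fixed (map_zero δ), zero_sub] at hkey
    have hmem : ((n+1).factorial : R) * (δ c) ^ (n + 1) ∈ J := by
      have := J.neg_mem hkey
      rw [neg_neg, nsmul_eq_mul] at this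
      exact this
    -- divide by (n+1)! using the char-zero field
    have hfac : (((n+1).factorial : ℕ) : F) ≠ 0 := by
      exact_mod_cast Nat.factorial_ne_zero (n+1)
    have hmem2 := J.mul_mem_left ((algebraMap F R) ((((n+1).factorial : ℕ) : F)⁻¹)) _ hmem
    rw [← mul_assoc] at hmem2
    have hone : (algebraMap F R) ((((n+1).factorial : ℕ) : F)⁻¹) *
        ((n+1).factorial : R) = 1 := by
      rw [show ((n+1).factorial : R) = algebraMap F R (((n+1).factorial : ℕ) : F) from
            (map_natCast _ _).symm,
        ← map_mul, inv_mul_cancel₀ hfac, map_one]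
    rwa [hone, one_mul] at hmem2
  refine ⟨K, ?_, ?_⟩
  · -- K is nil
    rintro x hx
    rw [TwoSidedIdeal.mem_mk'] at hx
    obtain ⟨b, hb, c, hc, rfl⟩ := hx
    obtain ⟨m, hm, hdm⟩ := hpowJ c hc
    -- (b + δ c) ^ m ≡ (δ c) ^ m  mod J
    have hmod : ∀ k : ℕ, (b + δ c) ^ k - (δ c) ^ k ∈ J := by
      intro k
      induction k with
      | zero => simp only [pow_zero, sub_self]; exact J.zero_mem
      | succ k ih =>
        have : (b + δ c) ^ (k + 1) - (δ c) ^ (k + 1) =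
            (b + δ c) * ((b + δ c) ^ k - (δ c) ^ k) + b * (δ c) ^ k := by
          rw [pow_succ', pow_succ']; noncomm_ring
        rw [this]
        exact J.add_mem (J.mul_mem_left _ _ ih) (J.mul_mem_right _ _ hb)
    have hxm : (b + δ c) ^ m ∈ J := by
      have := J.add_mem (hmod m) hdm
      simpa using this
    obtain ⟨l, hl⟩ := hJnil _ hxm
    exact IsNilpotent.of_pow ⟨l, hl⟩
  · -- δ a ∈ K
    rw [TwoSidedIdeal.mem_mk']
    exact ⟨0, J.zero_mem, a, haJ, by simp⟩
end
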